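/- arXiv:1801.08458 — 3 statements merged into one kernel-verified Lean document; each statement's English description precedes it below -/
import Mathlib

section
/- If B is a p-basis of A over k and S ⊂ A is a multiplicative subset containing no nilpotent elements, then the image of B in S⁻¹A is a p-basis of S⁻¹A over k. -/
open scoped TensorProduct

/-- The monomial `∏ b^(α b)` associated to a finitely supported exponent tuple on `B`. -/
noncomputable def pMonomial {A : Type*} [CommRing A] {B : Set A} (α : B →₀ ℕ) : A :=
  α.prod fun b n => (b : A) ^ n

/-- `B` is `p`-independent over `k`: the `p`-monomials in `B` are linearly independent
over the subring `A^p[k]`. -/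
def IsPIndependent (k : Type*) {A : Type*} [CommRing k] [CommRing A] [Algebra k A]
    (p : ℕ) (B : Set A) : Prop :=
  LinearIndependent (Algebra.adjoin k (Set.range fun a : A => a ^ p))
    (fun α : {α : B →₀ ℕ // ∀ b, α b < p} => pMonomial α.1)

/-- `B` is a `p`-basis of `A` over `k`. -/
def IsPBasis (k : Type*) {A : Type*} [CommRing k] [CommRing A] [Algebra k A]
    (p : ℕ) (B : Set A) : Prop :=
  IsPIndependent k p B ∧
    Algebra.adjoin k ((Set.range fun a : A => a ^ p) ∪ B) = ⊤

/-- An absolute `p`-basis: a `p`-basis over the prime field (equivalently over `ℤ`). -/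
def IsAbsolutePBasis {A : Type*} [CommRing A] (p : ℕ) (B : Set A) : Prop :=
  IsPBasis ℤ p B

/-- `B` is a differential basis of `A` over `k`. -/
def IsDifferentialBasis (k : Type*) {A : Type*} [CommRing k] [CommRing A] [Algebra k A]
    (B : Set A) : Prop :=
  ∃ bas : Module.Basis B A (KaehlerDifferential k A),
    ∀ b : B, bas b = KaehlerDifferential.D k A (b : A)

/-- Regular local ring: noetherian local ring whose maximal ideal is generated by
(Krull-)dimension many elements. -/
def IsRegularLocalRing' (R : Type*) [CommRing R] : Prop :=
  IsLocalRing R ∧ IsNoetherianRing R ∧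
    ∃ (n : ℕ) (z : Fin n → R), (Ideal.span (Set.range z)).IsMaximal ∧
      ringKrullDim R = n

/-- Regular ring: noetherian and all localizations at primes are regular local. -/
def IsRegularRing' (A : Type*) [CommRing A] : Prop :=
  IsNoetherianRing A ∧ ∀ (P : Ideal A) (hP : P.IsPrime), IsRegularLocalRing' (Localization.AtPrime P)

/-- Differential operators of order at most `n` over `k`, defined inductively. -/
def IsDiffOp (k A M : Type*) [CommRing k] [CommRing A] [Algebra k A]
    [AddCommGroup M] [Module A M] [Module k M] [IsScalarTower k A M] :
    ℕ → (A → M) → Prop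
  | 0, D => IsLinearMap A D
  | (n + 1), D => IsLinearMap k D ∧
      ∀ a : A, IsDiffOp k A M n (fun f => a • D f - D (a * f))

/-- Product of binomial coefficients `∏_b C(α_b, β_b)`. -/
noncomputable def pBinom {A : Type*} [CommRing A] {B : Set A} (α β : B →₀ ℕ) : ℕ :=
  letI := Classical.decEq A
  ∏ b ∈ α.support ∪ β.support, Nat.choose (α b) (β b)

/-- Product of multinomial coefficients `∏_b (β_b+β'_b)!/(β_b!β'_b!)`. -/
noncomputable def pMultinom {A : Type*} [CommRing A] {B : Set A} (β β' : B →₀ ℕ) : ℕ :=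
  letI := Classical.decEq A
  ∏ b ∈ β.support ∪ β'.support, Nat.choose (β b + β' b) (β b)

/-- Height of an ideal: the infimum of the Krull dimensions of localizations
at primes containing it. -/
noncomputable def idealHeight {R : Type*} [CommRing R] (I : Ideal R) : WithBot (WithTop ℕ) :=
  ⨅ Q : {Q : Ideal R // Q.IsPrime ∧ I ≤ Q},
    ringKrullDim (Localization (@Ideal.primeCompl R _ Q.1 Q.2.1))

/-- Differential saturation of an ideal by absolute differential operators of order `≤ n`. -/
noncomputable def diffSat {A : Type*} [CommRing A] (n : ℕ) (I : Ideal A) : Ideal A :=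
  Ideal.span {g | ∃ f ∈ I, ∃ Δ : A → A, IsDiffOp ℤ A A n Δ ∧ g = Δ f}

theorem statement2 {k A : Type*} [CommRing k] [CommRing A] [Algebra k A]
    (p : ℕ) [Fact p.Prime] [CharP A p] (B : Set A) (h : IsPBasis k p B)
    (S : Submonoid A) (hS : ∀ s ∈ S, ¬ IsNilpotent s) :
    IsPBasis k p (algebraMap A (Localization S) '' B) := by
  classical
  obtain ⟨hind, hspan⟩ := h
  have hp : p.Prime := Fact.out
  have hq : p - 1 + 1 = p := Nat.succ_pred_eq_of_pos hp.pos
  set L := Localization S with hLdef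
  set B' : Set L := algebraMap A (Localization S) '' B with hB'def
  have hind' : LinearIndependent (Algebra.adjoin k (Set.range fun a : A => a ^ p))
      (fun α : {α : B →₀ ℕ // ∀ b, α b < p} => pMonomial α.1) := hind
  -- Step 0: injectivity of the localization map on B
  have hfinj : ∀ b₁ b₂ : B, algebraMap A L ↑b₁ = algebraMap A L ↑b₂ → b₁ = b₂ := by
    intro b₁ b₂ hf
    by_contra hne
    obtain ⟨c, hc⟩ := (IsLocalization.eq_iff_exists S L).mp hf
    have hc' : (c : A) ^ p * ↑b₁ = (c : A) ^ p * ↑b₂ := by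
      calc (c : A) ^ p * ↑b₁ = (c : A) ^ (p - 1) * ((c : A) * ↑b₁) := by
            rw [← mul_assoc, ← pow_succ, hq]
        _ = (c : A) ^ (p - 1) * ((c : A) * ↑b₂) := by rw [hc]
        _ = (c : A) ^ p * ↑b₂ := by rw [← mul_assoc, ← pow_succ, hq]
    have hcp : (c : A) ^ p ∈ Algebra.adjoin k (Set.range fun a : A => a ^ p) :=
      Algebra.subset_adjoin ⟨c, rfl⟩
    have hlt : ∀ b0 b : B, (Finsupp.single b0 1 : B →₀ ℕ) b < p := by
      intro b0 b
      rw [Finsupp.single_apply]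
      split
      · exact hp.one_lt
      · exact hp.pos
    set i₁ : {α : B →₀ ℕ // ∀ b, α b < p} := ⟨Finsupp.single b₁ 1, hlt b₁⟩ with hi₁
    set i₂ : {α : B →₀ ℕ // ∀ b, α b < p} := ⟨Finsupp.single b₂ 1, hlt b₂⟩ with hi₂
    have hne' : i₁ ≠ i₂ := by
      intro hEq
      exact hne ((Finsupp.single_left_inj one_ne_zero).mp (congrArg Subtype.val hEq))
    have hmono0 : ∀ b : B, pMonomial (Finsupp.single b 1) = (b : A) := by
      intro b
      show ((Finsupp.single b 1).prod fun b n => (b : A) ^ n) = (b : A)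
      exact (Finsupp.prod_single_index (a := b) (b := 1)
          (h := fun (b : B) (n : ℕ) => (b : A) ^ n) (pow_zero (b : A))).trans (pow_one _)
    set g : {α : B →₀ ℕ // ∀ b, α b < p} →
        Algebra.adjoin k (Set.range fun a : A => a ^ p) :=
      fun i => if i = i₁ then ⟨(c : A) ^ p, hcp⟩ else
        if i = i₂ then -⟨(c : A) ^ p, hcp⟩ else 0 with hg
    have e1 : g i₁ = ⟨(c : A) ^ p, hcp⟩ := if_pos rfl
    have e2 : g i₂ = -⟨(c : A) ^ p, hcp⟩ := by
      have hgi : g i₂ = if i₂ = i₁ then ⟨(c : A) ^ p, hcp⟩ else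
          if i₂ = i₂ then -⟨(c : A) ^ p, hcp⟩ else 0 := rfl
      rw [hgi, if_neg hne'.symm, if_pos rfl]
    have hsum : ∑ i ∈ ({i₁, i₂} : Finset _), g i • pMonomial i.1 = 0 := by
      rw [Finset.sum_pair hne']
      rw [e1, e2, hmono0, hmono0, neg_smul]
      have e3 : (⟨(c : A) ^ p, hcp⟩ : Algebra.adjoin k (Set.range fun a : A => a ^ p)) •
          (↑b₁ : A) = (c : A) ^ p * ↑b₁ := rfl
      have e4 : (⟨(c : A) ^ p, hcp⟩ : Algebra.adjoin k (Set.range fun a : A => a ^ p)) •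
          (↑b₂ : A) = (c : A) ^ p * ↑b₂ := rfl
      rw [e3, e4, hc', add_neg_cancel]
    have h0 := linearIndependent_iff'.mp hind' {i₁, i₂} g hsum i₁ (Finset.mem_insert_self _ _)
    have hc0 : (c : A) ^ p = 0 := by
      simpa using congrArg Subtype.val (e1.symm.trans h0)
    exact hS c c.2 ⟨p, hc0⟩
  -- the equivalence B ≃ B'
  let e : B ≃ B' := Equiv.ofBijective (fun b => ⟨algebraMap A L ↑b, ⟨↑b, b.2, rfl⟩⟩)
    ⟨fun b₁ b₂ hEq => hfinj b₁ b₂ (congrArg Subtype.val hEq), by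
      rintro ⟨x, a, ha, rfl⟩
      exact ⟨⟨a, ha⟩, rfl⟩⟩
  have hmono : ∀ α : B' →₀ ℕ,
      algebraMap A L (pMonomial (Finsupp.equivMapDomain e.symm α)) = pMonomial α := by
    intro α
    simp only [pMonomial]
    rw [map_finsuppProd, Finsupp.prod_equivMapDomain]
    apply Finsupp.prod_congr
    intro b' _
    rw [map_pow]
    congr 1
    have : algebraMap A L ↑(e.symm b') = ↑(e (e.symm b')) := rfl
    rw [this, Equiv.apply_symm_apply]
  -- Spanning
  have hrange : ∀ a : A, algebraMap A L a ∈
      Algebra.adjoin k ((Set.range fun x : L => x ^ p) ∪ B') := by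
    intro a
    have h1 : (Algebra.adjoin k ((Set.range fun x : A => x ^ p) ∪ B)).map
        (IsScalarTower.toAlgHom k A L) ≤
        Algebra.adjoin k ((Set.range fun x : L => x ^ p) ∪ B') := by
      rw [AlgHom.map_adjoin]
      apply Algebra.adjoin_mono
      rintro x ⟨y, hy, rfl⟩
      rcases hy with ⟨z, rfl⟩ | hyB
      · exact Or.inl ⟨algebraMap A L z, by simp⟩
      · exact Or.inr ⟨y, hyB, rfl⟩
    exact h1 ⟨a, by rw [hspan]; trivial, rfl⟩
  have hspan' : Algebra.adjoin k ((Set.range fun x : L => x ^ p) ∪ B') = ⊤ := by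
    rw [eq_top_iff]
    rintro x -
    obtain ⟨⟨a, s⟩, rfl⟩ := IsLocalization.mk'_surjective S x
    have hs1 : IsLocalization.mk' L (1 : A) s * algebraMap A L ↑s = 1 := by
      rw [IsLocalization.mk'_spec, map_one]
    have hu : IsLocalization.mk' L (1 : A) s
        = algebraMap A L (↑s ^ (p - 1)) * (IsLocalization.mk' L (1 : A) s) ^ p := by
      calc IsLocalization.mk' L (1 : A) s
          = (IsLocalization.mk' L (1 : A) s * algebraMap A L ↑s) ^ (p - 1)
              * IsLocalization.mk' L (1 : A) s := by rw [hs1, one_pow, one_mul]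
        _ = algebraMap A L ↑s ^ (p - 1) *
              ((IsLocalization.mk' L (1 : A) s) ^ (p - 1) * IsLocalization.mk' L (1 : A) s) := by
            ring
        _ = algebraMap A L (↑s ^ (p - 1)) * (IsLocalization.mk' L (1 : A) s) ^ p := by
            rw [← pow_succ, hq, map_pow]
    show IsLocalization.mk' L a s ∈ _
    rw [IsLocalization.mk'_eq_mul_mk'_one, hu, ← mul_assoc, ← map_mul]
    exact mul_mem (hrange _) (Algebra.subset_adjoin (Or.inl ⟨_, rfl⟩))
  -- denominator clearing
  have hden : ∀ c ∈ Algebra.adjoin k (Set.range fun x : L => x ^ p),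
      ∃ s : S, ∃ r : A, r ∈ Algebra.adjoin k (Set.range fun x : A => x ^ p) ∧
        algebraMap A L ↑s ^ p * c = algebraMap A L r := by
    intro c hc
    induction hc using Algebra.adjoin_induction with
    | mem x hx =>
        obtain ⟨y, rfl⟩ := hx
        obtain ⟨⟨a, s⟩, rfl⟩ := IsLocalization.mk'_surjective S y
        refine ⟨s, a ^ p, Algebra.subset_adjoin ⟨a, rfl⟩, ?_⟩
        rw [← mul_pow, mul_comm (algebraMap A L ↑s), IsLocalization.mk'_spec, map_pow]
    | algebraMap r =>
        refine ⟨1, algebraMap k A r, Subalgebra.algebraMap_mem _ r, ?_⟩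
        rw [OneMemClass.coe_one, map_one, one_pow, one_mul,
          IsScalarTower.algebraMap_apply k A L]
    | add x y hx hy ihx ihy =>
        obtain ⟨s₁, r₁, hr₁, e₁⟩ := ihx
        obtain ⟨s₂, r₂, hr₂, e₂⟩ := ihy
        refine ⟨s₁ * s₂, ↑s₂ ^ p * r₁ + ↑s₁ ^ p * r₂,
          add_mem (mul_mem (Algebra.subset_adjoin ⟨↑s₂, rfl⟩) hr₁)
            (mul_mem (Algebra.subset_adjoin ⟨↑s₁, rfl⟩) hr₂), ?_⟩
        rw [Submonoid.coe_mul, map_mul, map_add, map_mul, map_mul, map_pow, map_pow,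
          ← e₁, ← e₂]
        ring
    | mul x y hx hy ihx ihy =>
        obtain ⟨s₁, r₁, hr₁, e₁⟩ := ihx
        obtain ⟨s₂, r₂, hr₂, e₂⟩ := ihy
        refine ⟨s₁ * s₂, r₁ * r₂, mul_mem hr₁ hr₂, ?_⟩
        rw [Submonoid.coe_mul, map_mul, map_mul, ← e₁, ← e₂]
        ring
  -- common denominator for finitely many coefficients
  have hcommon : ∀ (t : Finset {α : B' →₀ ℕ // ∀ b, α b < p})
      (g : {α : B' →₀ ℕ // ∀ b, α b < p} →
        Algebra.adjoin k (Set.range fun x : L => x ^ p)),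
      ∃ s : S, ∀ i ∈ t, ∃ r : A, r ∈ Algebra.adjoin k (Set.range fun x : A => x ^ p) ∧
        algebraMap A L ↑s ^ p * ↑(g i) = algebraMap A L r := by
    intro t g
    induction t using Finset.induction_on with
    | empty => exact ⟨1, by simp⟩
    | @insert j t hj ih =>
        obtain ⟨s, hs⟩ := ih
        obtain ⟨s', r', hr', e'⟩ := hden _ (g j).2
        refine ⟨s' * s, ?_⟩
        intro i hi
        rcases Finset.mem_insert.mp hi with rfl | hi
        · refine ⟨↑s ^ p * r', mul_mem (Algebra.subset_adjoin ⟨↑s, rfl⟩) hr', ?_⟩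
          rw [Submonoid.coe_mul, map_mul, mul_pow, mul_comm ((algebraMap A L ↑s') ^ p),
            mul_assoc, e', ← map_pow, ← map_mul]
        · obtain ⟨r, hr, e0⟩ := hs i hi
          refine ⟨↑s' ^ p * r, mul_mem (Algebra.subset_adjoin ⟨↑s', rfl⟩) hr, ?_⟩
          rw [Submonoid.coe_mul, map_mul, mul_pow, mul_assoc, e0, ← map_pow, ← map_mul]
  -- index transport
  have hmem' : ∀ (α : B' →₀ ℕ), (∀ b, α b < p) →
      ∀ b, (Finsupp.equivMapDomain e.symm α) b < p := by
    intro α hα b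
    rw [Finsupp.equivMapDomain_apply, Equiv.symm_symm]
    exact hα (e b)
  have hEMD : ∀ x : B' →₀ ℕ,
      Finsupp.equivMapDomain e (Finsupp.equivMapDomain e.symm x) = x := by
    intro x
    ext b'
    simp [Finsupp.equivMapDomain_apply]
  let F : {α : B' →₀ ℕ // ∀ b, α b < p} → {α : B →₀ ℕ // ∀ b, α b < p} :=
    fun i => ⟨Finsupp.equivMapDomain e.symm i.1, hmem' i.1 i.2⟩
  have hFinj : Function.Injective F := by
    intro i j hij
    apply Subtype.ext
    have h1 := congrArg Subtype.val hij
    have h2 := congrArg (Finsupp.equivMapDomain e) h1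
    rwa [hEMD, hEMD] at h2
  refine ⟨?_, hspan'⟩
  show LinearIndependent (Algebra.adjoin k (Set.range fun a : L => a ^ p))
    (fun α : {α : B' →₀ ℕ // ∀ b, α b < p} => pMonomial α.1)
  rw [linearIndependent_iff']
  intro t g hsum i hi
  obtain ⟨s, hs⟩ := hcommon t g
  have hs' : ∀ i : {α : B' →₀ ℕ // ∀ b, α b < p}, ∃ r : A,
      r ∈ Algebra.adjoin k (Set.range fun x : A => x ^ p) ∧
      (i ∈ t → algebraMap A L ↑s ^ p * ↑(g i) = algebraMap A L r) := by
    intro i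
    by_cases hi' : i ∈ t
    · obtain ⟨r, hr, e0⟩ := hs i hi'
      exact ⟨r, hr, fun _ => e0⟩
    · exact ⟨0, zero_mem _, fun hx => absurd hx hi'⟩
  choose r hrmem hr using hs'
  have hX : algebraMap A L
      (∑ j ∈ t, r j * pMonomial (Finsupp.equivMapDomain e.symm j.1)) = 0 := by
    rw [map_sum]
    have hcong : ∀ j ∈ t, algebraMap A L (r j * pMonomial (Finsupp.equivMapDomain e.symm j.1))
        = algebraMap A L ↑s ^ p * (↑(g j) * pMonomial j.1) := by
      intro j hj
      rw [map_mul, ← hr j hj, hmono j.1]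
      ring
    rw [Finset.sum_congr rfl hcong, ← Finset.mul_sum]
    have hz : ∑ j ∈ t, (↑(g j) : L) * pMonomial j.1 = 0 := hsum
    rw [hz, mul_zero]
  obtain ⟨c, hc⟩ := (IsLocalization.eq_iff_exists S L).mp
    (show algebraMap A L _ = algebraMap A L 0 by rw [hX, map_zero])
  have hc' : (↑c : A) ^ p *
      (∑ j ∈ t, r j * pMonomial (Finsupp.equivMapDomain e.symm j.1)) = 0 := by
    calc (↑c : A) ^ p * (∑ j ∈ t, r j * pMonomial (Finsupp.equivMapDomain e.symm j.1))
        = (↑c : A) ^ (p - 1) *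
          ((↑c : A) * ∑ j ∈ t, r j * pMonomial (Finsupp.equivMapDomain e.symm j.1)) := by
          rw [← mul_assoc, ← pow_succ, hq]
      _ = 0 := by rw [hc, mul_zero, mul_zero]
  have hli : LinearIndependent (Algebra.adjoin k (Set.range fun a : A => a ^ p))
      ((fun α : {α : B →₀ ℕ // ∀ b, α b < p} => pMonomial α.1) ∘ F) :=
    LinearIndependent.comp hind' F hFinj
  have hcp : (↑c : A) ^ p ∈ Algebra.adjoin k (Set.range fun a : A => a ^ p) :=
    Algebra.subset_adjoin ⟨↑c, rfl⟩
  have hsum2 : ∑ j ∈ t, ((↑c : A) ^ p * r j) * pMonomial (Finsupp.equivMapDomain e.symm j.1)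
      = 0 := by
    have hcong : ∀ j ∈ t, ((↑c : A) ^ p * r j) * pMonomial (Finsupp.equivMapDomain e.symm j.1)
        = (↑c : A) ^ p * (r j * pMonomial (Finsupp.equivMapDomain e.symm j.1)) :=
      fun j _ => mul_assoc _ _ _
    rw [Finset.sum_congr rfl hcong, ← Finset.mul_sum, hc']
  have hsum2' : ∑ j ∈ t,
      (⟨(↑c : A) ^ p * r j, mul_mem hcp (hrmem j)⟩ :
        Algebra.adjoin k (Set.range fun a : A => a ^ p)) •
      ((fun α : {α : B →₀ ℕ // ∀ b, α b < p} => pMonomial α.1) ∘ F) j = 0 := hsum2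
  have hkey := linearIndependent_iff'.mp hli t
    (fun j => ⟨(↑c : A) ^ p * r j, mul_mem hcp (hrmem j)⟩) hsum2' i hi
  have h0 : (↑c : A) ^ p * r i = 0 := congrArg Subtype.val hkey
  have huu : IsUnit (algebraMap A L ↑(c * s) ^ p) := (IsLocalization.map_units L (c * s)).pow p
  apply Subtype.ext
  have hfin : algebraMap A L ↑(c * s) ^ p * ↑(g i) = algebraMap A L ↑(c * s) ^ p * 0 := by
    rw [mul_zero, Submonoid.coe_mul, map_mul, mul_pow, mul_assoc, hr i hi,
      ← map_pow, ← map_mul, h0, map_zero]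
  exact huu.mul_left_cancel hfin
end

section
/- If B is a p-basis of A over k and a p-monomial b₁^{α₁}⋯b_r^{α_r} (with b_i ∈ B, 0 ≤ α_i < p) has a zero-divisor a in A, i.e. a·b₁^{α₁}⋯b_r^{α_r} = 0, then a is nilpotent. -/
open scoped TensorProduct

section PBasisAux
variable {k A : Type*} [CommRing k] [CommRing A] [Algebra k A] {B : Set A}

lemma pMonomial_zero' : pMonomial (0 : B →₀ ℕ) = 1 := by
  simp [pMonomial]

lemma pMonomial_add' (f g : B →₀ ℕ) :
    pMonomial (f + g) = pMonomial f * pMonomial g :=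
  Finsupp.prod_add_index' (fun b => pow_zero _) (fun b m n => pow_add _ _ _)

lemma pMonomial_eq_prod' (f : B →₀ ℕ) {s : Finset B} (hs : f.support ⊆ s) :
    pMonomial f = ∏ x ∈ s, (x : A) ^ f x :=
  Finsupp.prod_of_support_subset f hs _ fun x _ => pow_zero _

lemma pMonomial_nsmul (n : ℕ) (f : B →₀ ℕ) : pMonomial (n • f) = pMonomial f ^ n := by
  rw [pMonomial_eq_prod' (n • f) Finsupp.support_smul,
      pMonomial_eq_prod' f (subset_refl _), ← Finset.prod_pow]
  refine Finset.prod_congr rfl fun x _ => ?_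
  rw [Finsupp.smul_apply, smul_eq_mul, mul_comm, pow_mul]

noncomputable def pQuot (p : ℕ) (f : B →₀ ℕ) : B →₀ ℕ :=
  f.mapRange (· / p) (Nat.zero_div p)

noncomputable def pRem (p : ℕ) (f : B →₀ ℕ) : B →₀ ℕ :=
  f.mapRange (· % p) (Nat.zero_mod p)

lemma smul_pQuot_add_pRem (p : ℕ) (f : B →₀ ℕ) : p • pQuot p f + pRem p f = f := by
  ext x
  simp only [pQuot, pRem, Finsupp.add_apply, Finsupp.smul_apply, Finsupp.mapRange_apply,
    smul_eq_mul]
  exact Nat.div_add_mod (f x) p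

lemma pMonomial_divmod (p : ℕ) (f : B →₀ ℕ) :
    pMonomial f = pMonomial (pQuot p f) ^ p * pMonomial (pRem p f) := by
  conv_lhs => rw [← smul_pQuot_add_pRem p f]
  rw [pMonomial_add', pMonomial_nsmul]

lemma subalgebra_smul_def (S : Subalgebra k A) (r : S) (x : A) : r • x = (r : A) * x := rfl

lemma pow_p_mem (p : ℕ) (x : A) :
    x ^ p ∈ Algebra.adjoin k (Set.range fun a : A => a ^ p) :=
  Algebra.subset_adjoin ⟨x, rfl⟩

end PBasisAux

section Span
variable {k A : Type*} [CommRing k] [CommRing A] [Algebra k A] {B : Set A}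

lemma pMonomial_mem_span (p : ℕ) (hp : 0 < p) (f : B →₀ ℕ) :
    pMonomial f ∈ Submodule.span (Algebra.adjoin k (Set.range fun a : A => a ^ p))
      (Set.range fun i : {α : B →₀ ℕ // ∀ b, α b < p} => pMonomial i.1) := by
  rw [pMonomial_divmod p f]
  have h1 : pMonomial (pRem p f) ∈ Submodule.span (Algebra.adjoin k (Set.range fun a : A => a ^ p))
      (Set.range fun i : {α : B →₀ ℕ // ∀ b, α b < p} => pMonomial i.1) :=
    Submodule.subset_span ⟨⟨pRem p f, fun x => by
      simp only [pRem, Finsupp.mapRange_apply]; exact Nat.mod_lt _ hp⟩, rfl⟩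
  have h2 := Submodule.smul_mem _
    (⟨pMonomial (pQuot p f) ^ p, pow_p_mem (k := k) p _⟩ :
      Algebra.adjoin k (Set.range fun a : A => a ^ p)) h1
  rwa [subalgebra_smul_def] at h2

lemma span_pMonomial_eq_top (p : ℕ) (hp : 1 < p)
    (htop : Algebra.adjoin k ((Set.range fun a : A => a ^ p) ∪ B) = ⊤) :
    Submodule.span (Algebra.adjoin k (Set.range fun a : A => a ^ p))
      (Set.range fun i : {α : B →₀ ℕ // ∀ b, α b < p} => pMonomial i.1) = ⊤ := by
  classical
  set R := Algebra.adjoin k (Set.range fun a : A => a ^ p) with hRdef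
  set M := Submodule.span R
    (Set.range fun i : {α : B →₀ ℕ // ∀ b, α b < p} => pMonomial i.1) with hMdef
  have hp0 : 0 < p := lt_trans one_pos hp
  have hmono : ∀ f : B →₀ ℕ, pMonomial f ∈ M := fun f => pMonomial_mem_span p hp0 f
  have hmul : ∀ x ∈ M, ∀ y ∈ M, x * y ∈ M := by
    intro x hx
    induction hx using Submodule.span_induction with
    | mem x hxs =>
      obtain ⟨i, rfl⟩ := hxs
      intro y hy
      induction hy using Submodule.span_induction with
      | mem y hys =>
        obtain ⟨j, rfl⟩ := hys
        rw [← pMonomial_add']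
        exact hmono _
      | zero => rw [mul_zero]; exact M.zero_mem
      | add y z _ _ hy hz => rw [mul_add]; exact M.add_mem hy hz
      | smul r y _ hy => rw [mul_smul_comm]; exact M.smul_mem r hy
    | zero => intro y hy; rw [zero_mul]; exact M.zero_mem
    | add x z _ _ hx hz => intro y hy; rw [add_mul]; exact M.add_mem (hx y hy) (hz y hy)
    | smul r x _ hx => intro y hy; rw [smul_mul_assoc]; exact M.smul_mem r (hx y hy)
  have hone : (1 : A) ∈ M := by rw [← pMonomial_zero' (B := B)]; exact hmono 0
  have halg : ∀ c : k, algebraMap k A c ∈ M := by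
    intro c
    have hrw : algebraMap k A c = (⟨algebraMap k A c, R.algebraMap_mem c⟩ : R) • (1 : A) := by
      rw [subalgebra_smul_def, mul_one]
    rw [hrw]; exact M.smul_mem _ hone
  let S : Subalgebra k A :=
    { carrier := M
      mul_mem' := fun hx hy => hmul _ hx _ hy
      one_mem' := hone
      add_mem' := fun hx hy => M.add_mem hx hy
      zero_mem' := M.zero_mem
      algebraMap_mem' := halg }
  have hle : Algebra.adjoin k ((Set.range fun a : A => a ^ p) ∪ B) ≤ S := by
    rw [Algebra.adjoin_le_iff]
    rintro x (⟨y, rfl⟩ | hxB)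
    · show y ^ p ∈ M
      have hrw : y ^ p = (⟨y ^ p, pow_p_mem (k := k) p y⟩ : R) • (1 : A) := by
        rw [subalgebra_smul_def, mul_one]
      rw [hrw]; exact M.smul_mem _ hone
    · show x ∈ M
      have hrw : x = pMonomial (Finsupp.single (⟨x, hxB⟩ : B) 1) := by
        simp [pMonomial, Finsupp.prod_single_index]
      rw [hrw]
      exact Submodule.subset_span ⟨⟨Finsupp.single ⟨x, hxB⟩ 1, fun y => by
        rw [Finsupp.single_apply]; split <;> omega⟩, rfl⟩
  rw [Submodule.eq_top_iff']
  intro x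
  have hx : x ∈ Algebra.adjoin k ((Set.range fun a : A => a ^ p) ∪ B) := by
    rw [htop]; exact Algebra.mem_top
  exact hle hx

end Span

theorem statement3 {k A : Type*} [CommRing k] [CommRing A] [Algebra k A]
    (p : ℕ) [Fact p.Prime] [CharP A p] (B : Set A) (h : IsPBasis k p B)
    (r : ℕ) (b : Fin r → A) (hbB : ∀ i, b i ∈ B) (hinj : Function.Injective b)
    (α : Fin r → ℕ) (hα : ∀ i, α i < p)
    (a : A) (ha : a * ∏ i, b i ^ α i = 0) :
    IsNilpotent a := by
  classical
  have hp : p.Prime := Fact.out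
  have hp1 : 1 < p := hp.one_lt
  have hp0 : 0 < p := hp.pos
  set R := Algebra.adjoin k (Set.range fun a : A => a ^ p) with hRdef
  -- the exponent tuple δ of the monomial
  let e : Fin r ↪ B := ⟨fun i => ⟨b i, hbB i⟩, fun i j hij => hinj (congrArg Subtype.val hij)⟩
  set δ : B →₀ ℕ := Finsupp.embDomain e (Finsupp.equivFunOnFinite.symm α) with hδdef
  have hδlt : ∀ x : B, δ x < p := by
    intro x
    by_cases hx : ∃ i, e i = x
    · obtain ⟨i, rfl⟩ := hx
      rw [hδdef, Finsupp.embDomain_apply_self]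
      exact hα i
    · rw [hδdef, Finsupp.embDomain_notin_range _ _ _ (by simpa using hx)]
      exact hp0
  have hm : (∏ i, b i ^ α i) = pMonomial δ := by
    rw [pMonomial, hδdef, Finsupp.prod_embDomain,
      Finsupp.prod_of_support_subset _ (Finset.subset_univ _) _ (fun i _ => pow_zero _)]
    rfl
  -- decompose a over the monomial basis
  have haM : a ∈ Submodule.span R
      (Set.range fun i : {α : B →₀ ℕ // ∀ b, α b < p} => pMonomial i.1) := by
    rw [span_pMonomial_eq_top p hp1 h.2]; exact Submodule.mem_top
  obtain ⟨c, hc⟩ := Finsupp.mem_span_range_iff_exists_finsupp.mp haM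
  -- the shift map on reduced exponents
  set σ : {α : B →₀ ℕ // ∀ b, α b < p} → {α : B →₀ ℕ // ∀ b, α b < p} :=
    fun i => ⟨pRem p (i.1 + δ), fun x => by
      simp only [pRem, Finsupp.mapRange_apply]; exact Nat.mod_lt _ hp0⟩ with hσdef
  have hσinj : Function.Injective σ := by
    intro i j hij
    apply Subtype.ext
    ext x
    have h1 := congrArg (fun t => t.1 x) hij
    simp only [hσdef, pRem, Finsupp.mapRange_apply, Finsupp.add_apply] at h1
    have h2 : i.1 x ≡ j.1 x [MOD p] := Nat.ModEq.add_right_cancel' (δ x) h1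
    rwa [Nat.ModEq, Nat.mod_eq_of_lt (i.2 x), Nat.mod_eq_of_lt (j.2 x)] at h2
  -- the linear combination equation
  have hza : ∑ i ∈ c.support,
      ((c i * ⟨pMonomial (pQuot p (i.1 + δ)) ^ p, pow_p_mem (k := k) p _⟩ : R)) •
        pMonomial (σ i).1 = 0 := by
    have : ∀ i : {α : B →₀ ℕ // ∀ b, α b < p},
        (c i • pMonomial i.1) * pMonomial δ
          = ((c i * ⟨pMonomial (pQuot p (i.1 + δ)) ^ p, pow_p_mem (k := k) p _⟩ : R)) •
              pMonomial (σ i).1 := by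
      intro i
      rw [subalgebra_smul_def, subalgebra_smul_def, MulMemClass.coe_mul]
      show (c i : A) * pMonomial i.1 * pMonomial δ
        = (c i : A) * pMonomial (pQuot p (i.1 + δ)) ^ p * pMonomial (pRem p (i.1 + δ))
      rw [mul_assoc, ← pMonomial_add', pMonomial_divmod p (i.1 + δ), mul_assoc]
    calc ∑ i ∈ c.support,
        ((c i * ⟨pMonomial (pQuot p (i.1 + δ)) ^ p, pow_p_mem (k := k) p _⟩ : R)) •
          pMonomial (σ i).1
        = ∑ i ∈ c.support, (c i • pMonomial i.1) * pMonomial δ := by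
          exact Finset.sum_congr rfl fun i _ => (this i).symm
      _ = a * pMonomial δ := by rw [← Finset.sum_mul, ← hc, Finsupp.sum]
      _ = 0 := by rw [← hm, ha]
  -- linear independence along the shift
  have hli : LinearIndependent R fun i : {α : B →₀ ℕ // ∀ b, α b < p} => pMonomial (σ i).1 :=
    h.1.comp σ hσinj
  have hcoef := linearIndependent_iff'.mp hli c.support
    (fun i => (c i * ⟨pMonomial (pQuot p (i.1 + δ)) ^ p, pow_p_mem (k := k) p _⟩ : R)) hza
  -- each term of a is nilpotent
  have hterm : ∀ i ∈ c.support, ((c i : A) * pMonomial i.1) ^ p = 0 := by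
    intro i hi
    have h0 : (c i : A) * pMonomial (pQuot p (i.1 + δ)) ^ p = 0 := by
      have := congrArg (Subtype.val) (hcoef i hi)
      simpa using this
    set f := i.1 with hfdef
    set q := pQuot p (f + δ) with hqdef
    have hq_le : ∀ x : B, q x ≤ f x := by
      intro x
      have hf : f x < p := i.2 x
      have hd : δ x < p := hδlt x
      show (f + δ) x / p ≤ f x
      rw [Finsupp.add_apply]
      rcases lt_or_ge (f x + δ x) p with hlt | hge
      · simp [Nat.div_eq_of_lt hlt]
      · have h1 : (f x + δ x) / p = 1 := by
          apply Nat.div_eq_of_lt_le <;> omega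
        omega
    have hsupp : q.support ⊆ f.support := by
      intro x hx
      rw [Finsupp.mem_support_iff] at hx ⊢
      intro h0'
      exact hx (Nat.le_antisymm (h0' ▸ hq_le x) (Nat.zero_le _))
    have hprod : pMonomial f ^ p
        = pMonomial q ^ p * ∏ x ∈ f.support, (x : A) ^ (p * (f x - q x)) := by
      rw [← pMonomial_nsmul, ← pMonomial_nsmul,
        pMonomial_eq_prod' (p • f) Finsupp.support_smul,
        pMonomial_eq_prod' (p • q) (subset_trans Finsupp.support_smul hsupp),
        ← Finset.prod_mul_distrib]
      refine Finset.prod_congr rfl fun x _ => ?_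
      rw [← pow_add, Finsupp.smul_apply, Finsupp.smul_apply, smul_eq_mul, smul_eq_mul]
      congr 1
      rw [← Nat.mul_add, Nat.add_sub_cancel' (hq_le x)]
    have hcp : (c i : A) ^ p = (c i : A) ^ (p - 1) * (c i : A) := by
      rw [← pow_succ]
      congr 1
      omega
    calc ((c i : A) * pMonomial f) ^ p
        = (c i : A) ^ p * pMonomial f ^ p := mul_pow _ _ _
      _ = ((c i : A) ^ (p - 1) * ∏ x ∈ f.support, (x : A) ^ (p * (f x - q x)))
            * ((c i : A) * pMonomial q ^ p) := by rw [hprod, hcp]; ring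
      _ = 0 := by rw [h0, mul_zero]
  have hrw : a = ∑ i ∈ c.support, (c i : A) * pMonomial i.1 := by
    rw [← hc, Finsupp.sum]
    exact Finset.sum_congr rfl fun i _ => subalgebra_smul_def _ _ _
  rw [hrw]
  exact isNilpotent_sum fun i hi => ⟨p, hterm i hi⟩
end

section
/- Let (R, M, K) be a regular local ring of characteristic p > 0 with an absolute p-basis of the form B₀ ∪ {z₁,…,z_d}, where z₁,…,z_d is a regular system of parameters and B₀ ∩ M ⊂ {0}. Then the image of B₀ in K = R/M is an absolute p-basis of K; in particular the image of B₀ in K is algebraically independent over F_p, and F_p(B₀) is a quasi-coefficient field of R. -/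
open scoped TensorProduct

/-! ### Auxiliary machinery -/

section Mexp

variable {σ : Type*} {A : Type*} [CommRing A]

/-- Generalized monomial associated to a family. -/
noncomputable def mexp (g : σ → A) (α : σ →₀ ℕ) : A := α.prod fun i n => g i ^ n

lemma pMonomial_eq_mexp {B : Set A} (α : B →₀ ℕ) :
    pMonomial α = mexp (fun b : B => (b : A)) α := rfl

lemma mexp_zero (g : σ → A) : mexp g 0 = 1 := Finsupp.prod_zero_index

lemma mexp_add (g : σ → A) (α β : σ →₀ ℕ) : mexp g (α + β) = mexp g α * mexp g β :=
  Finsupp.prod_add_index' (fun _ => pow_zero _) (fun _ m n => pow_add _ m n)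

lemma mexp_single (g : σ → A) (i : σ) (n : ℕ) : mexp g (Finsupp.single i n) = g i ^ n :=
  Finsupp.prod_single_index (pow_zero _)

lemma mexp_nsmul (g : σ → A) (n : ℕ) (α : σ →₀ ℕ) : mexp g (n • α) = mexp g α ^ n := by
  induction n with
  | zero => rw [zero_smul, pow_zero, mexp_zero]
  | succ n ih => rw [succ_nsmul, mexp_add, ih, pow_succ]

lemma mexp_pow (g : σ → A) (p : ℕ) (α : σ →₀ ℕ) :
    mexp (fun i => g i ^ p) α = mexp g α ^ p := by
  rw [mexp, mexp, Finsupp.prod, Finsupp.prod, ← Finset.prod_pow]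
  exact Finset.prod_congr rfl fun i _ => pow_right_comm _ _ _

lemma map_mexp {A' : Type*} [CommRing A'] (f : A →+* A') (g : σ → A) (α : σ →₀ ℕ) :
    f (mexp g α) = mexp (fun i => f (g i)) α := by
  rw [mexp, mexp, Finsupp.prod, Finsupp.prod, map_prod]
  exact Finset.prod_congr rfl fun i _ => map_pow f _ _

lemma mexp_embDomain {σ' : Type*} (g : σ' → A) (f : σ ↪ σ') (α : σ →₀ ℕ) :
    mexp g (Finsupp.embDomain f α) = mexp (fun i => g (f i)) α := by
  rw [mexp, Finsupp.prod_embDomain]; rfl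

/-- componentwise division of exponents -/
noncomputable def fdiv (p : ℕ) (α : σ →₀ ℕ) : σ →₀ ℕ := α.mapRange (· / p) (Nat.zero_div p)

/-- componentwise remainder of exponents -/
noncomputable def fmod (p : ℕ) (α : σ →₀ ℕ) : σ →₀ ℕ := α.mapRange (· % p) (Nat.zero_mod p)

lemma fdiv_apply (p : ℕ) (α : σ →₀ ℕ) (i : σ) : fdiv p α i = α i / p := rfl
lemma fmod_apply (p : ℕ) (α : σ →₀ ℕ) (i : σ) : fmod p α i = α i % p := rfl

lemma fdiv_add_fmod (p : ℕ) (α : σ →₀ ℕ) : p • fdiv p α + fmod p α = α := by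
  ext i
  simp only [Finsupp.add_apply, Finsupp.smul_apply, fdiv_apply, fmod_apply, smul_eq_mul]
  exact Nat.div_add_mod _ _

lemma fmod_lt (p : ℕ) (hp : 0 < p) (α : σ →₀ ℕ) : ∀ i, fmod p α i < p :=
  fun _ => Nat.mod_lt _ hp

lemma mexp_reduce (g : σ → A) (p : ℕ) (α : σ →₀ ℕ) :
    mexp g α = mexp g (fdiv p α) ^ p * mexp g (fmod p α) := by
  conv_lhs => rw [← fdiv_add_fmod p α]
  rw [mexp_add, mexp_nsmul]

lemma mexp_factor (g : σ → A) {α : σ →₀ ℕ} {i : σ} (h : 1 ≤ α i) :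
    mexp g α = g i * mexp g (α - Finsupp.single i 1) := by
  classical
  have hα : α = Finsupp.single i 1 + (α - Finsupp.single i 1) := by
    ext j
    simp only [Finsupp.add_apply, Finsupp.tsub_apply, Finsupp.single_apply]
    rcases eq_or_ne i j with rfl | hij
    · rw [if_pos rfl]; omega
    · rw [if_neg hij]; omega
  conv_lhs => rw [hα]
  rw [mexp_add, mexp_single, pow_one]

end Mexp

section Decomp

open MvPolynomial

variable {σ : Type*} {C : Type*} [CommSemiring C]

/-- The `r`-th contraction of a polynomial, `p`-adically. -/
noncomputable def Qc [DecidableEq (σ →₀ ℕ)] (p : ℕ) (r : σ →₀ ℕ) (P : MvPolynomial σ C) :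
    MvPolynomial σ C :=
  ∑ m ∈ P.support.filter (fun m => fmod p m = r),
    MvPolynomial.monomial (fdiv p m) (MvPolynomial.coeff m P)

lemma eval₂_decomp [DecidableEq (σ →₀ ℕ)] {A' : Type*} [CommRing A'] (h : C →+* A') (g : σ → A')
    (p : ℕ) (P : MvPolynomial σ C) :
    MvPolynomial.eval₂ h g P =
      ∑ r ∈ P.support.image (fmod p),
        MvPolynomial.eval₂ h (fun i => g i ^ p) (Qc p r P) * mexp g r := by
  rw [MvPolynomial.eval₂_eq]
  rw [← Finset.sum_fiberwise_of_maps_to (g := fmod p) (t := P.support.image (fmod p))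
    (fun m hm => Finset.mem_image_of_mem _ hm)]
  refine Finset.sum_congr rfl fun r _ => ?_
  rw [Qc]
  rw [show MvPolynomial.eval₂ h (fun i => g i ^ p)
        (∑ m ∈ P.support.filter (fun m => fmod p m = r),
          MvPolynomial.monomial (fdiv p m) (MvPolynomial.coeff m P))
      = ∑ m ∈ P.support.filter (fun m => fmod p m = r),
          MvPolynomial.eval₂ h (fun i => g i ^ p)
            (MvPolynomial.monomial (fdiv p m) (MvPolynomial.coeff m P)) from
    map_sum (MvPolynomial.eval₂Hom h fun i => g i ^ p) _ _]
  rw [Finset.sum_mul]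
  refine Finset.sum_congr rfl fun m hm => ?_
  obtain ⟨-, hm2⟩ := Finset.mem_filter.mp hm
  rw [MvPolynomial.eval₂_monomial]
  have h1 : (∏ i ∈ m.support, g i ^ m i) = mexp g m := rfl
  have h2 : (Finsupp.prod (fdiv p m) fun n e => (g n ^ p) ^ e)
      = mexp (fun i => g i ^ p) (fdiv p m) := rfl
  rw [h1, h2, mexp_pow, mexp_reduce g p m, hm2]
  ring

lemma coeff_Qc [DecidableEq (σ →₀ ℕ)] (p : ℕ) (hp : 0 < p) (P : MvPolynomial σ C) (m : σ →₀ ℕ) :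
    MvPolynomial.coeff (fdiv p m) (Qc p (fmod p m) P) = MvPolynomial.coeff m P := by
  classical
  rw [Qc, MvPolynomial.coeff_sum]
  have key : ∀ m' : σ →₀ ℕ, fmod p m' = fmod p m → fdiv p m' = fdiv p m → m' = m := by
    intro m' h1 h2
    ext i
    have e1 : m' i % p = m i % p := by
      have := congrArg (fun f : σ →₀ ℕ => f i) h1; simpa [fmod_apply] using this
    have e2 : m' i / p = m i / p := by
      have := congrArg (fun f : σ →₀ ℕ => f i) h2; simpa [fdiv_apply] using this
    have e3 := Nat.div_add_mod (m' i) p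
    have e4 := Nat.div_add_mod (m i) p
    rw [e1, e2] at e3
    omega
  by_cases hm : m ∈ P.support
  · have hmem : m ∈ P.support.filter (fun m' => fmod p m' = fmod p m) :=
      Finset.mem_filter.mpr ⟨hm, rfl⟩
    rw [Finset.sum_eq_single_of_mem m hmem]
    · rw [MvPolynomial.coeff_monomial, if_pos rfl]
    · intro m' hm' hne
      obtain ⟨-, h1⟩ := Finset.mem_filter.mp hm'
      rw [MvPolynomial.coeff_monomial, if_neg]
      intro h2
      exact hne (key m' h1 h2)
  · rw [MvPolynomial.notMem_support_iff.mp hm, Finset.sum_eq_zero]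
    intro m' hm'
    obtain ⟨hm'1, h1⟩ := Finset.mem_filter.mp hm'
    rw [MvPolynomial.coeff_monomial, if_neg]
    intro h2
    exact hm (key m' h1 h2 ▸ hm'1)

lemma eq_zero_of_Qc_eq_zero [DecidableEq (σ →₀ ℕ)] (p : ℕ) (hp : 0 < p) (P : MvPolynomial σ C)
    (hQ : ∀ r ∈ P.support.image (fmod p), Qc p r P = 0) : P = 0 := by
  apply MvPolynomial.ext
  intro m
  rw [MvPolynomial.coeff_zero]
  by_cases hm : m ∈ P.support
  · have h1 := hQ (fmod p m) (Finset.mem_image_of_mem _ hm)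
    have := coeff_Qc p hp P m
    rw [h1, MvPolynomial.coeff_zero] at this
    exact this.symm
  · exact MvPolynomial.notMem_support_iff.mp hm

lemma totalDegree_Qc_le [DecidableEq (σ →₀ ℕ)] (p : ℕ) (hp : 0 < p) (P : MvPolynomial σ C) (r : σ →₀ ℕ) :
    (Qc p r P).totalDegree ≤ P.totalDegree / p := by
  rw [Qc]
  refine le_trans (MvPolynomial.totalDegree_finset_sum _ _) (Finset.sup_le ?_)
  intro m hm
  obtain ⟨hm1, -⟩ := Finset.mem_filter.mp hm
  refine le_trans (MvPolynomial.totalDegree_monomial_le _ _) ?_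
  have h1 : ((fdiv p m).sum fun _ e => e) ≤ (m.sum fun _ e => e) / p := by
    rw [Nat.le_div_iff_mul_le hp]
    have h2 : ((fdiv p m).sum fun _ e => e) * p = ∑ i ∈ (fdiv p m).support, (m i / p) * p := by
      rw [Finsupp.sum, Finset.sum_mul]; rfl
    rw [h2]
    calc ∑ i ∈ (fdiv p m).support, (m i / p) * p
        ≤ ∑ i ∈ (fdiv p m).support, m i :=
          Finset.sum_le_sum fun i _ => Nat.div_mul_le_self _ _
      _ ≤ ∑ i ∈ m.support, m i := by
          refine Finset.sum_le_sum_of_subset ?_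
          exact Finsupp.support_mapRange
      _ = m.sum fun _ e => e := rfl
  exact le_trans h1 (Nat.div_le_div_right (MvPolynomial.le_totalDegree hm1))

end Decomp

section LIHelper

/-- Extract vanishing of coefficients from a finite linear relation, for a linearly
independent family. -/
lemma li_finset_eq_zero {S M ι ι₀ : Type*} [Ring S] [AddCommGroup M] [Module S M] {v : ι → M}
    (hv : LinearIndependent S v) (t : Finset ι₀) (h : ι₀ → ι) (hinj : Set.InjOn h t)
    (w : ι₀ → S) (hsum : ∑ i ∈ t, w i • v (h i) = 0) : ∀ i ∈ t, w i = 0 := by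
  classical
  have h0 : Finsupp.linearCombination S v (∑ i ∈ t, Finsupp.single (h i) (w i)) = 0 := by
    rw [map_sum]
    simpa only [Finsupp.linearCombination_single] using hsum
  have h1 : (∑ i ∈ t, Finsupp.single (h i) (w i)) = (0 : ι →₀ S) :=
    linearIndependent_iff.mp hv _ h0
  intro i hi
  have h2 := congrArg (fun f : ι →₀ S => f (h i)) h1
  simp only [Finset.sum_apply', Finsupp.coe_zero, Pi.zero_apply] at h2
  rw [Finset.sum_eq_single_of_mem i hi] at h2
  · rwa [Finsupp.single_apply, if_pos rfl] at h2
  · intro j hj hne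
    rw [Finsupp.single_apply, if_neg]
    exact fun hc => hne (hinj hj hi hc)

end LIHelper

section Key

/-- Every element of a ring spanned by `p`-th powers and `B` lies in the span of reduced
`B`-monomials over the subring generated by `p`-th powers. -/
lemma mem_span_reduced {R : Type*} [CommRing R] {p : ℕ} (hp : 1 < p) {B : Set R}
    (hspan : Algebra.adjoin ℤ ((Set.range fun a : R => a ^ p) ∪ B) = ⊤) (x : R) :
    x ∈ Submodule.span (Algebra.adjoin ℤ (Set.range fun a : R => a ^ p))
      (Set.range fun α : {α : B →₀ ℕ // ∀ b, α b < p} => pMonomial α.1) := by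
  classical
  have hone : (1 : R) ∈ Submodule.span (Algebra.adjoin ℤ (Set.range fun a : R => a ^ p))
      (Set.range fun α : {α : B →₀ ℕ // ∀ b, α b < p} => pMonomial α.1) :=
    Submodule.subset_span ⟨⟨0, fun b => by rw [Finsupp.zero_apply]; omega⟩,
      by show pMonomial (0 : B →₀ ℕ) = 1; rw [pMonomial_eq_mexp, mexp_zero]⟩
  have hmono : ∀ γ : B →₀ ℕ, pMonomial γ ∈
      Submodule.span (Algebra.adjoin ℤ (Set.range fun a : R => a ^ p))
        (Set.range fun α : {α : B →₀ ℕ // ∀ b, α b < p} => pMonomial α.1) := by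
    intro γ
    have hred : ∀ b, fmod p γ b < p := fmod_lt p (by omega) γ
    have hc : (pMonomial (fdiv p γ) : R) ^ p ∈
        Algebra.adjoin ℤ (Set.range fun a : R => a ^ p) :=
      Algebra.subset_adjoin ⟨pMonomial (fdiv p γ), rfl⟩
    have heq : pMonomial γ = (⟨_, hc⟩ : Algebra.adjoin ℤ (Set.range fun a : R => a ^ p))
        • pMonomial (fmod p γ) := by
      show pMonomial γ = pMonomial (fdiv p γ) ^ p * pMonomial (fmod p γ)
      rw [pMonomial_eq_mexp γ, mexp_reduce _ p, ← pMonomial_eq_mexp, ← pMonomial_eq_mexp]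
    rw [heq]
    exact Submodule.smul_mem _ _
      (Submodule.subset_span ⟨⟨fmod p γ, hred⟩, rfl⟩)
  have hmul : ∀ x ∈ Submodule.span (Algebra.adjoin ℤ (Set.range fun a : R => a ^ p))
      (Set.range fun α : {α : B →₀ ℕ // ∀ b, α b < p} => pMonomial α.1),
      ∀ y ∈ Submodule.span (Algebra.adjoin ℤ (Set.range fun a : R => a ^ p))
      (Set.range fun α : {α : B →₀ ℕ // ∀ b, α b < p} => pMonomial α.1),
      x * y ∈ Submodule.span (Algebra.adjoin ℤ (Set.range fun a : R => a ^ p))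
      (Set.range fun α : {α : B →₀ ℕ // ∀ b, α b < p} => pMonomial α.1) := by
    intro x hx y hy
    induction hx using Submodule.span_induction with
    | mem w hw =>
      obtain ⟨δ, rfl⟩ := hw
      induction hy using Submodule.span_induction with
      | mem w' hw' =>
        obtain ⟨γ, rfl⟩ := hw'
        have heq : pMonomial δ.1 * pMonomial γ.1 = pMonomial (δ.1 + γ.1) := by
          rw [pMonomial_eq_mexp δ.1, pMonomial_eq_mexp γ.1, pMonomial_eq_mexp (δ.1 + γ.1),
            mexp_add]
        rw [heq]; exact hmono _
      | zero => rw [mul_zero]; exact Submodule.zero_mem _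
      | add a b _ _ ha hb => rw [mul_add]; exact Submodule.add_mem _ ha hb
      | smul s w _ hw => rw [mul_smul_comm]; exact Submodule.smul_mem _ _ hw
    | zero => rw [zero_mul]; exact Submodule.zero_mem _
    | add a b _ _ ha hb => rw [add_mul]; exact Submodule.add_mem _ ha hb
    | smul s w _ hw => rw [smul_mul_assoc]; exact Submodule.smul_mem _ _ hw
  have hx : x ∈ Algebra.adjoin ℤ ((Set.range fun a : R => a ^ p) ∪ B) := by
    rw [hspan]; exact Algebra.mem_top
  induction hx using Algebra.adjoin_induction with
  | mem y hy =>
    rcases hy with ⟨a, rfl⟩ | hyB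
    · beta_reduce
      have hm : (a : R) ^ p ∈ Algebra.adjoin ℤ (Set.range fun a : R => a ^ p) :=
        Algebra.subset_adjoin ⟨a, rfl⟩
      have heq2 : a ^ p = (⟨a ^ p, hm⟩ : Algebra.adjoin ℤ (Set.range fun a : R => a ^ p)) • (1 : R) :=
        (mul_one _).symm
      rw [heq2]; exact Submodule.smul_mem _ _ hone
    · have : y = pMonomial (Finsupp.single (⟨y, hyB⟩ : B) 1) := by
        rw [pMonomial_eq_mexp, mexp_single, pow_one]
      rw [this]; exact hmono _
  | algebraMap n =>
    have hm : algebraMap ℤ R n ∈ Algebra.adjoin ℤ (Set.range fun a : R => a ^ p) :=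
      Subalgebra.algebraMap_mem _ n
    have heq2 : algebraMap ℤ R n
        = (⟨algebraMap ℤ R n, hm⟩ : Algebra.adjoin ℤ (Set.range fun a : R => a ^ p)) • (1 : R) :=
      (mul_one _).symm
    rw [heq2]; exact Submodule.smul_mem _ _ hone
  | add a b ha' hb' ha hb => exact Submodule.add_mem _ ha hb
  | mul a b ha' hb' ha hb => exact hmul a ha b hb

open IsLocalRing in
/-- Key lemma: coefficients (over `R^p[ℤ]`) of a pure-`B₀` reduced-monomial combination that
lies in the maximal ideal must lie in the maximal ideal. -/
lemma key_coeff_mem {R : Type*} [CommRing R] [IsLocalRing R] {p : ℕ} (hp : 1 < p)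
    {d : ℕ} {z : Fin d → R} (hz : Ideal.span (Set.range z) = maximalIdeal R)
    {B : Set R} (hzB : Set.range z ⊆ B)
    (hli : LinearIndependent (Algebra.adjoin ℤ (Set.range fun a : R => a ^ p))
      (fun α : {α : B →₀ ℕ // ∀ b, α b < p} => pMonomial α.1))
    (hspan : Algebra.adjoin ℤ ((Set.range fun a : R => a ^ p) ∪ B) = ⊤)
    (l : {α : B →₀ ℕ // ∀ b, α b < p} →₀ (Algebra.adjoin ℤ (Set.range fun a : R => a ^ p)))
    (hpure : ∀ α ∈ l.support, ∀ x ∈ (α : {α : B →₀ ℕ // ∀ b, α b < p}).1.support,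
      (x : R) ∉ Set.range z)
    (hmem : Finsupp.linearCombination (Algebra.adjoin ℤ (Set.range fun a : R => a ^ p))
      (fun α : {α : B →₀ ℕ // ∀ b, α b < p} => pMonomial α.1) l ∈ maximalIdeal R) :
    ∀ α, (l α : R) ∈ maximalIdeal R := by
  classical
  set G : Set R := {w | (∃ γ : {α : B →₀ ℕ // ∀ b, α b < p},
      (∃ x ∈ γ.1.support, (x : R) ∈ Set.range z) ∧ w = pMonomial γ.1) ∨
    (∃ j : Fin d, ∃ γ : {α : B →₀ ℕ // ∀ b, α b < p}, w = z j ^ p * pMonomial γ.1)} with hGdef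
  have hzmono : ∀ γ : B →₀ ℕ, (∃ x ∈ γ.support, (x : R) ∈ Set.range z) →
      pMonomial γ ∈ Submodule.span (Algebra.adjoin ℤ (Set.range fun a : R => a ^ p)) G := by
    rintro γ ⟨x₀, hx₀s, hx₀z⟩
    have hredm : ∀ b, fmod p γ b < p := fmod_lt p (by omega) γ
    by_cases hcase : ∃ x ∈ (fmod p γ).support, (x : R) ∈ Set.range z
    · have hgen : pMonomial (fmod p γ) ∈ G := Or.inl ⟨⟨fmod p γ, hredm⟩, hcase, rfl⟩
      have hc : (pMonomial (fdiv p γ) : R) ^ p ∈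
          Algebra.adjoin ℤ (Set.range fun a : R => a ^ p) :=
        Algebra.subset_adjoin ⟨pMonomial (fdiv p γ), rfl⟩
      have heq : pMonomial γ = (⟨_, hc⟩ : Algebra.adjoin ℤ (Set.range fun a : R => a ^ p))
          • pMonomial (fmod p γ) := by
        show pMonomial γ = pMonomial (fdiv p γ) ^ p * pMonomial (fmod p γ)
        rw [pMonomial_eq_mexp γ, mexp_reduce _ p, ← pMonomial_eq_mexp, ← pMonomial_eq_mexp]
      rw [heq]
      exact Submodule.smul_mem _ _ (Submodule.subset_span hgen)
    · obtain ⟨j, hj⟩ := hx₀z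
      have h1 : γ x₀ ≠ 0 := Finsupp.mem_support_iff.mp hx₀s
      have h2 : fmod p γ x₀ = 0 := by
        by_contra h2
        exact hcase ⟨x₀, Finsupp.mem_support_iff.mpr h2, ⟨j, hj⟩⟩
      have h3 : 1 ≤ fdiv p γ x₀ := by
        rw [fdiv_apply]
        rw [fmod_apply] at h2
        rcases Nat.eq_zero_or_pos (γ x₀ / p) with h | h
        · exfalso
          have h4 := Nat.div_add_mod (γ x₀) p
          rw [h, Nat.mul_zero, Nat.zero_add] at h4
          exact h1 (by omega)
        · exact h
      have hfac : mexp (fun b : B => (b : R)) (fdiv p γ)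
          = (x₀ : R) * mexp (fun b : B => (b : R)) (fdiv p γ - Finsupp.single x₀ 1) :=
        mexp_factor _ h3
      have hgen : z j ^ p * pMonomial (fmod p γ) ∈ G := Or.inr ⟨j, ⟨fmod p γ, hredm⟩, rfl⟩
      have hc : (mexp (fun b : B => (b : R)) (fdiv p γ - Finsupp.single x₀ 1)) ^ p ∈
          Algebra.adjoin ℤ (Set.range fun a : R => a ^ p) :=
        Algebra.subset_adjoin ⟨_, rfl⟩
      have heq : pMonomial γ = (⟨_, hc⟩ : Algebra.adjoin ℤ (Set.range fun a : R => a ^ p))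
          • (z j ^ p * pMonomial (fmod p γ)) := by
        show pMonomial γ = (mexp (fun b : B => (b : R)) (fdiv p γ - Finsupp.single x₀ 1)) ^ p
          * (z j ^ p * pMonomial (fmod p γ))
        rw [pMonomial_eq_mexp γ, pMonomial_eq_mexp (fmod p γ), mexp_reduce _ p, hfac, ← hj,
          mul_pow]
        ring
      rw [heq]
      exact Submodule.smul_mem _ _ (Submodule.subset_span hgen)
  have hmulG : ∀ r : R, ∀ v ∈ G, r * v ∈
      Submodule.span (Algebra.adjoin ℤ (Set.range fun a : R => a ^ p)) G := by
    intro r v hv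
    have hr := mem_span_reduced hp hspan r
    induction hr using Submodule.span_induction with
    | mem w hw =>
      obtain ⟨δ, rfl⟩ := hw
      rcases hv with ⟨γ, ⟨x, hxs, hxz⟩, rfl⟩ | ⟨j, γ, rfl⟩
      · have heq : pMonomial δ.1 * pMonomial γ.1 = pMonomial (δ.1 + γ.1) := by
          rw [pMonomial_eq_mexp δ.1, pMonomial_eq_mexp γ.1, pMonomial_eq_mexp (δ.1 + γ.1),
            mexp_add]
        rw [heq]
        refine hzmono _ ⟨x, Finsupp.mem_support_iff.mpr ?_, hxz⟩
        have h1 : γ.1 x ≠ 0 := Finsupp.mem_support_iff.mp hxs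
        rw [Finsupp.add_apply]; omega
      · have hc : (mexp (fun b : B => (b : R)) (fdiv p (δ.1 + γ.1))) ^ p ∈
            Algebra.adjoin ℤ (Set.range fun a : R => a ^ p) :=
          Algebra.subset_adjoin ⟨_, rfl⟩
        have hredm : ∀ b, fmod p (δ.1 + γ.1) b < p := fmod_lt p (by omega) _
        have hgen : z j ^ p * pMonomial (fmod p (δ.1 + γ.1)) ∈ G :=
          Or.inr ⟨j, ⟨_, hredm⟩, rfl⟩
        have heq : pMonomial δ.1 * (z j ^ p * pMonomial γ.1)
            = (⟨_, hc⟩ : Algebra.adjoin ℤ (Set.range fun a : R => a ^ p))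
              • (z j ^ p * pMonomial (fmod p (δ.1 + γ.1))) := by
          show pMonomial δ.1 * (z j ^ p * pMonomial γ.1)
            = (mexp (fun b : B => (b : R)) (fdiv p (δ.1 + γ.1))) ^ p
              * (z j ^ p * pMonomial (fmod p (δ.1 + γ.1)))
          rw [pMonomial_eq_mexp δ.1, pMonomial_eq_mexp γ.1, pMonomial_eq_mexp (fmod p _)]
          rw [show mexp (fun b : B => (b : R)) δ.1 * (z j ^ p * mexp (fun b : B => (b : R)) γ.1)
              = z j ^ p * (mexp (fun b : B => (b : R)) δ.1 * mexp (fun b : B => (b : R)) γ.1)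
              by ring]
          rw [← mexp_add, mexp_reduce _ p (δ.1 + γ.1)]
          ring
        rw [heq]
        exact Submodule.smul_mem _ _ (Submodule.subset_span hgen)
    | zero => rw [zero_mul]; exact Submodule.zero_mem _
    | add a b _ _ ha hb => rw [add_mul]; exact Submodule.add_mem _ ha hb
    | smul s w _ hw => rw [smul_mul_assoc]; exact Submodule.smul_mem _ _ hw
  have hmulV : ∀ r : R, ∀ v ∈ Submodule.span (Algebra.adjoin ℤ
      (Set.range fun a : R => a ^ p)) G, r * v ∈
      Submodule.span (Algebra.adjoin ℤ (Set.range fun a : R => a ^ p)) G := by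
    intro r v hv
    induction hv using Submodule.span_induction with
    | mem w hw => exact hmulG r w hw
    | zero => rw [mul_zero]; exact Submodule.zero_mem _
    | add a b _ _ ha hb => rw [mul_add]; exact Submodule.add_mem _ ha hb
    | smul s w _ hw => rw [mul_smul_comm]; exact Submodule.smul_mem _ _ hw
  have hMV : ∀ x ∈ maximalIdeal R, x ∈
      Submodule.span (Algebra.adjoin ℤ (Set.range fun a : R => a ^ p)) G := by
    intro x hx
    rw [← hz] at hx
    induction hx using Submodule.span_induction with
    | mem w hw =>
      obtain ⟨j, rfl⟩ := hw
      have hb : z j ∈ B := hzB ⟨j, rfl⟩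
      have heq : z j = pMonomial (Finsupp.single (⟨z j, hb⟩ : B) 1) := by
        rw [pMonomial_eq_mexp, mexp_single, pow_one]
      rw [heq]
      refine hzmono _ ⟨⟨z j, hb⟩, ?_, ⟨j, rfl⟩⟩
      rw [Finsupp.mem_support_iff, Finsupp.single_apply, if_pos rfl]
      exact one_ne_zero
    | zero => exact Submodule.zero_mem _
    | add a b _ _ ha hb => exact Submodule.add_mem _ ha hb
    | smul r x _ hx' => rw [smul_eq_mul]; exact hmulV r x hx'
  let C : Submodule (Algebra.adjoin ℤ (Set.range fun a : R => a ^ p))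
      ({α : B →₀ ℕ // ∀ b, α b < p} →₀ (Algebra.adjoin ℤ (Set.range fun a : R => a ^ p))) :=
    { carrier := {l' | ∀ α : {α : B →₀ ℕ // ∀ b, α b < p},
        (∀ x ∈ α.1.support, (x : R) ∉ Set.range z) → ((l' α : R) ∈ maximalIdeal R)}
      add_mem' := by
        intro a b ha hb α hα
        rw [Finsupp.add_apply]
        exact add_mem (ha α hα) (hb α hα)
      zero_mem' := by
        intro α hα
        rw [Finsupp.coe_zero, Pi.zero_apply]
        exact Submodule.zero_mem _
      smul_mem' := by
        intro c l' hl' α hα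
        rw [Finsupp.smul_apply]
        exact Ideal.mul_mem_left _ _ (hl' α hα) }
  have hVC : Submodule.span (Algebra.adjoin ℤ (Set.range fun a : R => a ^ p)) G ≤
      Submodule.map (Finsupp.linearCombination
        (Algebra.adjoin ℤ (Set.range fun a : R => a ^ p))
        (fun α : {α : B →₀ ℕ // ∀ b, α b < p} => pMonomial α.1)) C := by
    rw [Submodule.span_le]
    rintro w (⟨γ, hγz, rfl⟩ | ⟨j, γ, rfl⟩)
    · refine ⟨Finsupp.single γ 1, ?_, ?_⟩
      · intro α hα
        rcases eq_or_ne γ α with rfl | hne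
        · exfalso; obtain ⟨x, hxs, hxz⟩ := hγz; exact hα x hxs hxz
        · rw [Finsupp.single_apply, if_neg hne]
          exact Submodule.zero_mem _
      · rw [Finsupp.linearCombination_single, one_smul]
    · have hzjS : z j ^ p ∈ Algebra.adjoin ℤ (Set.range fun a : R => a ^ p) :=
        Algebra.subset_adjoin ⟨z j, rfl⟩
      refine ⟨Finsupp.single γ ⟨z j ^ p, hzjS⟩, ?_, ?_⟩
      · intro α hα
        rcases eq_or_ne γ α with rfl | hne
        · rw [Finsupp.single_apply, if_pos rfl]
          have hzj : z j ∈ maximalIdeal R := by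
            rw [← hz]; exact Ideal.subset_span ⟨j, rfl⟩
          exact Ideal.pow_mem_of_mem _ hzj p (by omega)
        · rw [Finsupp.single_apply, if_neg hne]
          exact Submodule.zero_mem _
      · rw [Finsupp.linearCombination_single]
        rfl
  have hinj : Function.Injective (Finsupp.linearCombination
      (Algebra.adjoin ℤ (Set.range fun a : R => a ^ p))
      (fun α : {α : B →₀ ℕ // ∀ b, α b < p} => pMonomial α.1)) := hli
  obtain ⟨l', hl'C, hl'F⟩ := hVC (hMV _ hmem)
  have hll : l' = l := hinj hl'F
  intro α
  by_cases hα : α ∈ l.support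
  · rw [← hll]; exact hl'C α (hpure α hα)
  · rw [Finsupp.notMem_support_iff.mp hα]
    exact Submodule.zero_mem _
end Key

lemma embDomain_red {σ σ' : Type*} {p : ℕ} (e : σ ↪ σ') {α : σ →₀ ℕ}
    (hp : 0 < p) (hα : ∀ b, α b < p) : ∀ b, Finsupp.embDomain e α b < p := by
  intro b
  by_cases hb : b ∈ Set.range e
  · obtain ⟨a, rfl⟩ := hb
    rw [Finsupp.embDomain_apply_self]
    exact hα a
  · rw [Finsupp.embDomain_notin_range _ _ _ hb]
    omega

lemma single_red {σ : Type*} {p : ℕ} (hp : 1 < p) (i : σ) :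
    ∀ b, (Finsupp.single i 1 : σ →₀ ℕ) b < p := by
  classical
  intro b
  rw [Finsupp.single_apply]
  split <;> omega

set_option maxHeartbeats 1000000 in
set_option synthInstance.maxHeartbeats 400000 in
theorem statement10 {R : Type*} [CommRing R] [IsLocalRing R]
    (p : ℕ) [Fact p.Prime] [CharP R p] [CharP (IsLocalRing.ResidueField R) p]
    (hreg : IsRegularLocalRing' R)
    (d : ℕ) (z : Fin d → R) (hz : Ideal.span (Set.range z) = IsLocalRing.maximalIdeal R)
    (B₀ : Set R) (hB : IsAbsolutePBasis p (B₀ ∪ Set.range z))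
    (hB₀M : B₀ ∩ (IsLocalRing.maximalIdeal R : Set R) ⊆ {0}) :
    letI : Algebra (ZMod p) (IsLocalRing.ResidueField R) :=
      ZMod.algebra (IsLocalRing.ResidueField R) p
    IsAbsolutePBasis p (IsLocalRing.residue R '' B₀) ∧
      AlgebraicIndependent (ZMod p) (fun b : B₀ => IsLocalRing.residue R (b : R)) ∧
      Algebra.FormallyEtale
        (IntermediateField.adjoin (ZMod p) (IsLocalRing.residue R '' B₀))
        (IsLocalRing.ResidueField R) := by
  classical
  letI : Algebra (ZMod p) (IsLocalRing.ResidueField R) :=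
    ZMod.algebra (IsLocalRing.ResidueField R) p
  have hp1 : 1 < p := (Fact.out : p.Prime).one_lt
  have hli : LinearIndependent
      (Algebra.adjoin ℤ (Set.range fun a : R => a ^ p))
      (fun α : {α : ↥(B₀ ∪ Set.range z) →₀ ℕ // ∀ b, α b < p} => pMonomial α.1) := hB.1
  have hspan : Algebra.adjoin ℤ ((Set.range fun a : R => a ^ p) ∪ (B₀ ∪ Set.range z)) = ⊤ :=
    hB.2
  have hπsurj : Function.Surjective (IsLocalRing.residue R) := Ideal.Quotient.mk_surjective
  have hzM : ∀ j, z j ∈ IsLocalRing.maximalIdeal R := by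
    intro j; rw [← hz]; exact Ideal.subset_span ⟨j, rfl⟩
  haveI hSnontriv : Nontrivial (Algebra.adjoin ℤ (Set.range fun a : R => a ^ p)) :=
    ⟨1, 0, fun h => (one_ne_zero : (1 : R) ≠ 0) (congrArg Subtype.val h)⟩
  have h0B : (0 : R) ∉ B₀ ∪ Set.range z := by
    intro h0
    apply hli.ne_zero ⟨Finsupp.single (⟨0, h0⟩ : ↥(B₀ ∪ Set.range z)) 1, single_red hp1 _⟩
    show pMonomial _ = 0
    rw [pMonomial_eq_mexp, mexp_single]
    exact zero_pow (by omega)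
  have hdisj : ∀ x ∈ B₀, x ∉ Set.range z := by
    intro x hx hxz
    obtain ⟨j, rfl⟩ := hxz
    have : z j = 0 := hB₀M ⟨hx, hzM j⟩
    rw [this] at hx
    exact h0B (Or.inl hx)
  -- image facts
  have himg : (IsLocalRing.residue R).toIntAlgHom '' (Set.range fun a : R => a ^ p)
      = Set.range fun a : IsLocalRing.ResidueField R => a ^ p := by
    ext c; constructor
    · rintro ⟨_, ⟨a, rfl⟩, rfl⟩
      exact ⟨IsLocalRing.residue R a, (map_pow (IsLocalRing.residue R) a p).symm⟩
    · rintro ⟨a, rfl⟩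
      obtain ⟨r, rfl⟩ := hπsurj a
      exact ⟨r ^ p, ⟨r, rfl⟩, map_pow (IsLocalRing.residue R) r p⟩
  have hSsurj : ∀ c : Algebra.adjoin ℤ
      (Set.range fun a : IsLocalRing.ResidueField R => a ^ p),
      ∃ r : Algebra.adjoin ℤ (Set.range fun a : R => a ^ p),
        IsLocalRing.residue R (r : R) = (c : IsLocalRing.ResidueField R) := by
    intro c
    have hc : (c : IsLocalRing.ResidueField R) ∈ Subalgebra.map
        (IsLocalRing.residue R).toIntAlgHom
        (Algebra.adjoin ℤ (Set.range fun a : R => a ^ p)) := by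
      rw [AlgHom.map_adjoin, himg]
      exact c.2
    obtain ⟨r, hr, hr2⟩ := Subalgebra.mem_map.mp hc
    exact ⟨⟨r, hr⟩, hr2⟩
  -- Part 1 : spanning
  have hKspan : Algebra.adjoin ℤ
      ((Set.range fun a : IsLocalRing.ResidueField R => a ^ p)
        ∪ (IsLocalRing.residue R '' B₀)) = ⊤ := by
    rw [eq_top_iff]
    rintro c -
    have hc : c ∈ Subalgebra.map (IsLocalRing.residue R).toIntAlgHom
        (Algebra.adjoin ℤ ((Set.range fun a : R => a ^ p) ∪ (B₀ ∪ Set.range z))) := by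
      rw [hspan]
      exact ⟨(hπsurj c).choose, trivial, (hπsurj c).choose_spec⟩
    rw [AlgHom.map_adjoin] at hc
    have hle : Algebra.adjoin ℤ ((IsLocalRing.residue R).toIntAlgHom ''
          ((Set.range fun a : R => a ^ p) ∪ (B₀ ∪ Set.range z)))
        ≤ Algebra.adjoin ℤ ((Set.range fun a : IsLocalRing.ResidueField R => a ^ p)
          ∪ (IsLocalRing.residue R '' B₀)) := by
      apply Algebra.adjoin_le
      rintro _ ⟨x, hx, rfl⟩
      rcases hx with ⟨a, rfl⟩ | hx0 | ⟨j, rfl⟩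
      · exact Algebra.subset_adjoin
          (Or.inl ⟨IsLocalRing.residue R a, (map_pow (IsLocalRing.residue R) a p).symm⟩)
      · exact Algebra.subset_adjoin (Or.inr ⟨x, hx0, rfl⟩)
      · have hzj : (IsLocalRing.residue R).toIntAlgHom (z j) = 0 :=
          Ideal.Quotient.eq_zero_iff_mem.mpr (hzM j)
        rw [hzj]
        exact Subalgebra.zero_mem _
    exact hle hc
  -- injectivity of residue on B₀
  have hinjB₀ : ∀ b₁ ∈ B₀, ∀ b₂ ∈ B₀,
      IsLocalRing.residue R b₁ = IsLocalRing.residue R b₂ → b₁ = b₂ := by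
    intro b₁ hb₁ b₂ hb₂ hpi
    by_contra hne
    have hii : (⟨Finsupp.single (⟨b₁, Or.inl hb₁⟩ : ↥(B₀ ∪ Set.range z)) 1, single_red hp1 _⟩ :
          {α : ↥(B₀ ∪ Set.range z) →₀ ℕ // ∀ b, α b < p})
        ≠ ⟨Finsupp.single (⟨b₂, Or.inl hb₂⟩ : ↥(B₀ ∪ Set.range z)) 1, single_red hp1 _⟩ := by
      intro h
      have h2 : (Finsupp.single (⟨b₁, Or.inl hb₁⟩ : ↥(B₀ ∪ Set.range z)) 1 :
            ↥(B₀ ∪ Set.range z) →₀ ℕ) = Finsupp.single ⟨b₂, Or.inl hb₂⟩ 1 :=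
        congrArg Subtype.val h
      have h3 := DFunLike.congr_fun h2 (⟨b₁, Or.inl hb₁⟩ : ↥(B₀ ∪ Set.range z))
      rw [Finsupp.single_eq_same, Finsupp.single_apply,
        if_neg (fun hc => hne (congrArg Subtype.val hc).symm)] at h3
      exact one_ne_zero h3
    set i₁ : {α : ↥(B₀ ∪ Set.range z) →₀ ℕ // ∀ b, α b < p} :=
      ⟨Finsupp.single (⟨b₁, Or.inl hb₁⟩ : ↥(B₀ ∪ Set.range z)) 1, single_red hp1 _⟩ with hi₁
    set i₂ : {α : ↥(B₀ ∪ Set.range z) →₀ ℕ // ∀ b, α b < p} :=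
      ⟨Finsupp.single (⟨b₂, Or.inl hb₂⟩ : ↥(B₀ ∪ Set.range z)) 1, single_red hp1 _⟩ with hi₂
    set l : {α : ↥(B₀ ∪ Set.range z) →₀ ℕ // ∀ b, α b < p} →₀
        (Algebra.adjoin ℤ (Set.range fun a : R => a ^ p)) :=
      Finsupp.single i₁ 1 - Finsupp.single i₂ 1 with hldef
    have hFl : Finsupp.linearCombination (Algebra.adjoin ℤ (Set.range fun a : R => a ^ p))
        (fun α : {α : ↥(B₀ ∪ Set.range z) →₀ ℕ // ∀ b, α b < p} => pMonomial α.1) l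
        = b₁ - b₂ := by
      rw [hldef, map_sub, Finsupp.linearCombination_single, Finsupp.linearCombination_single,
        one_smul, one_smul]
      show pMonomial i₁.1 - pMonomial i₂.1 = b₁ - b₂
      rw [hi₁, hi₂]
      show pMonomial (Finsupp.single _ 1) - pMonomial (Finsupp.single _ 1) = _
      rw [pMonomial_eq_mexp, mexp_single, pow_one, pMonomial_eq_mexp, mexp_single, pow_one]
    have hpure : ∀ α ∈ l.support, ∀ x ∈ (α : {α : ↥(B₀ ∪ Set.range z) →₀ ℕ // ∀ b,
        α b < p}).1.support, (x : R) ∉ Set.range z := by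
      intro α hα x hx
      have hsub := Finsupp.support_sub (f := Finsupp.single i₁ (1 : Algebra.adjoin ℤ
        (Set.range fun a : R => a ^ p))) (g := Finsupp.single i₂ 1)
      rw [← hldef] at hsub
      have := hsub hα
      rcases Finset.mem_union.mp this with h | h
      · have h1 := Finsupp.support_single_subset h
        rw [Finset.mem_singleton] at h1
        subst h1
        have h2 := Finsupp.support_single_subset hx
        rw [Finset.mem_singleton] at h2
        subst h2
        exact hdisj _ hb₁
      · have h1 := Finsupp.support_single_subset h
        rw [Finset.mem_singleton] at h1
        subst h1
        have h2 := Finsupp.support_single_subset hx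
        rw [Finset.mem_singleton] at h2
        subst h2
        exact hdisj _ hb₂
    have hmem : Finsupp.linearCombination (Algebra.adjoin ℤ (Set.range fun a : R => a ^ p))
        (fun α : {α : ↥(B₀ ∪ Set.range z) →₀ ℕ // ∀ b, α b < p} => pMonomial α.1) l
        ∈ IsLocalRing.maximalIdeal R := by
      rw [hFl]
      apply Ideal.Quotient.eq_zero_iff_mem.mp
      rw [map_sub]
      show IsLocalRing.residue R b₁ - IsLocalRing.residue R b₂ = 0
      rw [hpi, sub_self]
    have hkey := key_coeff_mem hp1 hz Set.subset_union_right hli hspan l hpure hmem i₁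
    rw [hldef, Finsupp.sub_apply, Finsupp.single_eq_same, Finsupp.single_eq_of_ne'
      (fun h => hii h.symm), sub_zero] at hkey
    exact (Ideal.ne_top_iff_one _).mp
      (IsLocalRing.maximalIdeal.isMaximal R).ne_top hkey
  -- section of residue on the image of B₀
  have hsec : ∀ b : ↥(IsLocalRing.residue R '' B₀), ∃ r : R, r ∈ B₀ ∧
      IsLocalRing.residue R r = (b : IsLocalRing.ResidueField R) := by
    rintro ⟨b, r, hr, he⟩
    exact ⟨r, hr, he⟩
  choose sec hsecB hsecπ using hsec
  have hsecinj : Function.Injective sec := by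
    intro b₁ b₂ h
    apply Subtype.ext
    rw [← hsecπ b₁, ← hsecπ b₂, h]
  have hKli : LinearIndependent
      (Algebra.adjoin ℤ (Set.range fun a : IsLocalRing.ResidueField R => a ^ p))
      (fun α : {α : ↥(IsLocalRing.residue R '' B₀) →₀ ℕ // ∀ b, α b < p} =>
        pMonomial α.1) := by
    rw [linearIndependent_iff]
    intro l hl
    set e : ↥(IsLocalRing.residue R '' B₀) ↪ ↥(B₀ ∪ Set.range z) :=
      ⟨fun b => ⟨sec b, Or.inl (hsecB b)⟩,
        fun b₁ b₂ h => hsecinj (congrArg Subtype.val h)⟩ with hedef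
    have hembred : ∀ (α : ↥(IsLocalRing.residue R '' B₀) →₀ ℕ), (∀ b, α b < p) →
        ∀ b, (Finsupp.embDomain e α) b < p := by
      intro α hα b
      by_cases hb : b ∈ Set.range e
      · obtain ⟨a, rfl⟩ := hb
        rw [Finsupp.embDomain_apply_self]
        exact hα a
      · rw [Finsupp.embDomain_notin_range _ _ _ hb]
        omega
    set lift' : ↥(Algebra.adjoin ℤ (Set.range fun a : IsLocalRing.ResidueField R => a ^ p)) →
        ↥(Algebra.adjoin ℤ (Set.range fun a : R => a ^ p)) := fun c =>
      if hc : c = 0 then 0 else (hSsurj c).choose with hliftdef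
    have hlift0 : lift' 0 = 0 := dif_pos rfl
    have hliftπ : ∀ c, IsLocalRing.residue R ((lift' c : R)) = (c : IsLocalRing.ResidueField R) := by
      intro c
      by_cases hc : c = 0
      · rw [hliftdef]
        simp only [dif_pos hc, hc]
        simp
      · rw [hliftdef]
        simp only [dif_neg hc]
        exact (hSsurj c).choose_spec
    set G : {α : ↥(IsLocalRing.residue R '' B₀) →₀ ℕ // ∀ b, α b < p} →
        {α : ↥(B₀ ∪ Set.range z) →₀ ℕ // ∀ b, α b < p} :=
      fun α => ⟨Finsupp.embDomain e α.1, hembred α.1 α.2⟩ with hGdef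
    have hGinj : Function.Injective G := by
      intro α β h
      exact Subtype.ext (Finsupp.embDomain_injective e (congrArg Subtype.val h))
    set lR := Finsupp.mapDomain G (l.mapRange lift' hlift0) with hlR
    have hlRpure : ∀ α ∈ lR.support,
        ∀ x ∈ (α : {α : ↥(B₀ ∪ Set.range z) →₀ ℕ // ∀ b, α b < p}).1.support,
        (x : R) ∉ Set.range z := by
      intro α hα x hx
      have h1 := Finsupp.mapDomain_support hα
      obtain ⟨β, hβ, rfl⟩ := Finset.mem_image.mp h1
      rw [show (G β).1 = Finsupp.embDomain e β.1 from rfl, Finsupp.support_embDomain] at hx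
      obtain ⟨y, hy, rfl⟩ := Finset.mem_map.mp hx
      exact hdisj _ (hsecB y)
    have hsupp : (l.mapRange lift' hlift0).support = l.support := by
      apply Finset.Subset.antisymm
      · exact Finsupp.support_mapRange
      · intro α hα
        rw [Finsupp.mem_support_iff] at hα ⊢
        rw [Finsupp.mapRange_apply]
        intro h0
        apply hα
        have h2 := hliftπ (l α)
        rw [h0] at h2
        apply Subtype.ext
        rw [← h2]
        simp
    have hπcomb : IsLocalRing.residue R
        (Finsupp.linearCombination (Algebra.adjoin ℤ (Set.range fun a : R => a ^ p))
          (fun α : {α : ↥(B₀ ∪ Set.range z) →₀ ℕ // ∀ b, α b < p} => pMonomial α.1) lR)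
        = 0 := by
      rw [hlR, Finsupp.linearCombination_mapDomain, Finsupp.linearCombination_apply,
        Finsupp.sum, map_sum, ← hl, Finsupp.linearCombination_apply, Finsupp.sum, hsupp]
      refine Finset.sum_congr rfl fun α hα => ?_
      rw [Finsupp.mapRange_apply]
      show IsLocalRing.residue R ((lift' (l α) : R) * pMonomial (G α).1)
        = (l α : IsLocalRing.ResidueField R) * pMonomial α.1
      rw [map_mul, hliftπ]
      congr 1
      rw [show (G α).1 = Finsupp.embDomain e α.1 from rfl]
      rw [pMonomial_eq_mexp, map_mexp, mexp_embDomain, pMonomial_eq_mexp]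
      have hfun : (fun i : ↥(IsLocalRing.residue R '' B₀) =>
          IsLocalRing.residue R ((e i : R))) = fun b : ↥(IsLocalRing.residue R '' B₀) =>
          (b : IsLocalRing.ResidueField R) := funext fun i => hsecπ i
      rw [hfun]
    have hmem : Finsupp.linearCombination (Algebra.adjoin ℤ (Set.range fun a : R => a ^ p))
        (fun α : {α : ↥(B₀ ∪ Set.range z) →₀ ℕ // ∀ b, α b < p} => pMonomial α.1) lR
        ∈ IsLocalRing.maximalIdeal R := Ideal.Quotient.eq_zero_iff_mem.mp hπcomb
    have hkey := key_coeff_mem hp1 hz Set.subset_union_right hli hspan lR hlRpure hmem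
    refine Finsupp.ext fun α => ?_
    have h1 := hkey (G α)
    rw [hlR, Finsupp.mapDomain_apply hGinj, Finsupp.mapRange_apply] at h1
    have h2 : (l α : IsLocalRing.ResidueField R) = 0 := by
      rw [← hliftπ (l α)]
      exact Ideal.Quotient.eq_zero_iff_mem.mpr h1
    rw [Finsupp.coe_zero, Pi.zero_apply]
    exact Subtype.ext h2
  refine ⟨⟨hKli, hKspan⟩, ?_, ?_⟩
  · -- Part 2 : algebraic independence
    haveI : ExpChar (IsLocalRing.ResidueField R) p :=
      ExpChar.prime (Fact.out : p.Prime)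
    rw [algebraicIndependent_iff]
    intro P₀ hP₀
    suffices H : ∀ n, ∀ P : MvPolynomial B₀ (ZMod p), P.totalDegree ≤ n →
        MvPolynomial.aeval (fun b : B₀ => IsLocalRing.residue R (b : R)) P = 0 → P = 0 by
      exact H P₀.totalDegree P₀ le_rfl hP₀
    intro n
    induction n using Nat.strong_induction_on with
    | _ n IH =>
      intro P hdeg hval
      by_cases hd0 : P.totalDegree = 0
      · have hC : P = MvPolynomial.C (MvPolynomial.coeff 0 P) := by
          apply MvPolynomial.ext
          intro m
          rcases eq_or_ne m 0 with rfl | hm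
          · rw [MvPolynomial.coeff_C, if_pos rfl]
          · rw [MvPolynomial.coeff_C, if_neg (Ne.symm hm)]
            by_contra hc
            have hms := MvPolynomial.mem_support_iff.mpr hc
            have hall := (MvPolynomial.totalDegree_eq_zero_iff _ P).mp hd0 m hms
            exact hm (Finsupp.ext fun i => hall i)
        rw [hC] at hval ⊢
        rw [MvPolynomial.aeval_C] at hval
        have h0 : MvPolynomial.coeff 0 P = 0 :=
          (algebraMap (ZMod p) (IsLocalRing.ResidueField R)).injective
            (by rw [map_zero]; exact hval)
        rw [h0, map_zero]
      · set g : B₀ → IsLocalRing.ResidueField R :=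
          fun b => IsLocalRing.residue R (b : R) with hgdef
        rw [MvPolynomial.aeval_def,
          eval₂_decomp (algebraMap (ZMod p) (IsLocalRing.ResidueField R)) g p P] at hval
        have hfrob : ∀ Q : MvPolynomial B₀ (ZMod p),
            MvPolynomial.eval₂ (algebraMap (ZMod p) (IsLocalRing.ResidueField R))
              (fun i : B₀ => g i ^ p) Q
            = (MvPolynomial.eval₂ (algebraMap (ZMod p) (IsLocalRing.ResidueField R)) g Q)
              ^ p := by
          intro Q
          have h1 := MvPolynomial.eval₂_comp_left
            (frobenius (IsLocalRing.ResidueField R) p)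
            (algebraMap (ZMod p) (IsLocalRing.ResidueField R)) g Q
          have h2 : (frobenius (IsLocalRing.ResidueField R) p).comp
              (algebraMap (ZMod p) (IsLocalRing.ResidueField R))
              = algebraMap (ZMod p) (IsLocalRing.ResidueField R) := by
            ext c
            show frobenius (IsLocalRing.ResidueField R) p
              (algebraMap (ZMod p) (IsLocalRing.ResidueField R) c) = _
            rw [frobenius_def, ← map_pow, ZMod.pow_card]
          have h3 : (⇑(frobenius (IsLocalRing.ResidueField R) p) ∘ g)
              = fun i : B₀ => g i ^ p := funext fun i => frobenius_def p (g i)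
          rw [h2, h3] at h1
          rw [← h1, frobenius_def]
        set jmap : B₀ ↪ ↥(IsLocalRing.residue R '' B₀) :=
          ⟨fun b => ⟨IsLocalRing.residue R (b : R), ⟨b.1, b.2, rfl⟩⟩,
            fun b₁ b₂ h =>
              Subtype.ext (hinjB₀ _ b₁.2 _ b₂.2 (congrArg Subtype.val h))⟩ with hjdef
        have hval2 : ∑ r ∈ P.support.image (fmod p),
            ((MvPolynomial.eval₂ (algebraMap (ZMod p) (IsLocalRing.ResidueField R)) g
              (Qc p r P)) ^ p) * pMonomial (Finsupp.embDomain jmap r) = 0 := by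
          rw [← hval]
          refine Finset.sum_congr rfl fun r _ => ?_
          rw [hfrob (Qc p r P)]
          congr 1
          rw [pMonomial_eq_mexp, mexp_embDomain]
          rfl
        rw [← Finset.sum_attach (P.support.image (fmod p))
          (fun r => ((MvPolynomial.eval₂ (algebraMap (ZMod p)
            (IsLocalRing.ResidueField R)) g (Qc p r P)) ^ p)
            * pMonomial (Finsupp.embDomain jmap r))] at hval2
        have hredr : ∀ r : {x // x ∈ P.support.image (fmod p)},
            ∀ b, (Finsupp.embDomain jmap r.1) b < p := by
          intro r
          refine embDomain_red jmap (by omega) ?_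
          obtain ⟨m, _, he⟩ := Finset.mem_image.mp r.2
          intro b
          rw [← he]
          exact fmod_lt p (by omega) m b
        have happ := li_finset_eq_zero hKli (P.support.image (fmod p)).attach
          (fun r => (⟨Finsupp.embDomain jmap r.1, hredr r⟩ :
            {α : ↥(IsLocalRing.residue R '' B₀) →₀ ℕ // ∀ b, α b < p}))
          (fun r₁ _ r₂ _ h => Subtype.ext (Finsupp.embDomain_injective jmap
            (congrArg Subtype.val h)))
          (fun r => ⟨(MvPolynomial.eval₂ (algebraMap (ZMod p)
            (IsLocalRing.ResidueField R)) g (Qc p r.1 P)) ^ p,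
            Algebra.subset_adjoin ⟨_, rfl⟩⟩)
          (by
            refine Eq.trans (Finset.sum_congr rfl fun r _ => ?_) hval2
            rfl)
        have hQzero : ∀ r ∈ P.support.image (fmod p), Qc p r P = 0 := by
          intro r hr
          have h1 := happ ⟨r, hr⟩ (Finset.mem_attach _ _)
          have h2 : (MvPolynomial.eval₂ (algebraMap (ZMod p)
              (IsLocalRing.ResidueField R)) g (Qc p r P)) ^ p = 0 :=
            congrArg Subtype.val h1
          have h3 : MvPolynomial.eval₂ (algebraMap (ZMod p)
              (IsLocalRing.ResidueField R)) g (Qc p r P) = 0 :=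
            (pow_eq_zero_iff (by omega : p ≠ 0)).mp h2
          refine IH (P.totalDegree / p)
            (lt_of_lt_of_le (Nat.div_lt_self (Nat.pos_of_ne_zero hd0) hp1) hdeg)
            _ (totalDegree_Qc_le p (by omega) P r) ?_
          rw [MvPolynomial.aeval_def]
          exact h3
        exact eq_zero_of_Qc_eq_zero p (by omega) P hQzero
  · -- Part 3 : formally étale
    haveI hexpK : ExpChar (IsLocalRing.ResidueField R) p :=
      ExpChar.prime (Fact.out : p.Prime)
    haveI hchark₀ : CharP (↥(IntermediateField.adjoin (ZMod p)
        (IsLocalRing.residue R '' B₀))) p :=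
      charP_of_injective_algebraMap
        (algebraMap (ZMod p) (↥(IntermediateField.adjoin (ZMod p)
          (IsLocalRing.residue R '' B₀)))).injective p
    refine Algebra.FormallyEtale.iff_formallyUnramified_and_formallySmooth.mpr ⟨?_, ?_⟩
    · -- formally unramified
      refine ⟨?_⟩
      rw [subsingleton_iff_forall_eq 0]
      intro ω
      have hD0 : ∀ x : IsLocalRing.ResidueField R,
          KaehlerDifferential.D (↥(IntermediateField.adjoin (ZMod p)
            (IsLocalRing.residue R '' B₀))) (IsLocalRing.ResidueField R) x = 0 := by
        intro x
        have hx : x ∈ Algebra.adjoin ℤ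
            ((Set.range fun a : IsLocalRing.ResidueField R => a ^ p)
              ∪ (IsLocalRing.residue R '' B₀)) := by
          rw [hKspan]; trivial
        induction hx using Algebra.adjoin_induction with
        | mem y hy =>
          rcases hy with ⟨a, rfl⟩ | hy
          · beta_reduce
            rw [Derivation.leibniz_pow]
            rw [← Nat.cast_smul_eq_nsmul (IsLocalRing.ResidueField R),
              CharP.cast_eq_zero (IsLocalRing.ResidueField R) p, zero_smul]
          · have hyk : y ∈ IntermediateField.adjoin (ZMod p)
                (IsLocalRing.residue R '' B₀) := IntermediateField.subset_adjoin _ _ hy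
            have h1 : y = algebraMap (↥(IntermediateField.adjoin (ZMod p)
                (IsLocalRing.residue R '' B₀))) (IsLocalRing.ResidueField R) ⟨y, hyk⟩ := rfl
            rw [h1, Derivation.map_algebraMap]
        | algebraMap n =>
          have h1 : algebraMap ℤ (IsLocalRing.ResidueField R) n
              = algebraMap (↥(IntermediateField.adjoin (ZMod p)
                (IsLocalRing.residue R '' B₀))) (IsLocalRing.ResidueField R) (n : _) :=
            (eq_intCast (algebraMap ℤ (IsLocalRing.ResidueField R)) n).trans
              (map_intCast (algebraMap (↥(IntermediateField.adjoin (ZMod p)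
                (IsLocalRing.residue R '' B₀))) (IsLocalRing.ResidueField R)) n).symm
          rw [h1, Derivation.map_algebraMap]
        | add a b _ _ ha hb => rw [map_add, ha, hb, add_zero]
        | mul a b _ _ ha hb =>
          rw [Derivation.leibniz, ha, hb, smul_zero, smul_zero, add_zero]
      have hω : ω ∈ Submodule.span (IsLocalRing.ResidueField R)
          (Set.range (KaehlerDifferential.D (↥(IntermediateField.adjoin (ZMod p)
            (IsLocalRing.residue R '' B₀))) (IsLocalRing.ResidueField R))) := by
        rw [KaehlerDifferential.span_range_derivation]; trivial
      induction hω using Submodule.span_induction with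
      | mem w hw =>
        obtain ⟨x, rfl⟩ := hw
        exact hD0 x
      | zero => rfl
      | add a b _ _ ha hb => rw [ha, hb, add_zero]
      | smul c w _ hw => rw [hw, smul_zero]
    · -- formally smooth
      refine Algebra.FormallySmooth.of_comp_surjective ?_
      intro B' _ _ I hI f
      rcases subsingleton_or_nontrivial B' with hB' | hB'
      · haveI : Subsingleton (B' ⧸ I) :=
          ⟨fun a b => by
            obtain ⟨a, rfl⟩ := Ideal.Quotient.mk_surjective a
            obtain ⟨b, rfl⟩ := Ideal.Quotient.mk_surjective b
            rw [Subsingleton.elim a b]⟩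
        refine ⟨{ toFun := fun _ => 1
                  map_one' := rfl
                  map_mul' := fun _ _ => Subsingleton.elim _ _
                  map_zero' := Subsingleton.elim _ _
                  map_add' := fun _ _ => Subsingleton.elim _ _
                  commutes' := fun _ => Subsingleton.elim _ _ }, ?_⟩
        exact AlgHom.ext fun x => Subsingleton.elim _ _
      · haveI : CharP B' p := charP_of_injective_algebraMap
          (algebraMap (↥(IntermediateField.adjoin (ZMod p)
            (IsLocalRing.residue R '' B₀))) B').injective p
        haveI : ExpChar B' p := ExpChar.prime (Fact.out : p.Prime)
        have hIp : ∀ i ∈ I, i ^ p = 0 := by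
          intro i hi
          have h2 : i ^ 2 = 0 := by
            have h3 : i ^ 2 ∈ I ^ 2 := by
              rw [pow_two, pow_two]
              exact Ideal.mul_mem_mul hi hi
            rw [hI] at h3
            exact (Submodule.mem_bot _).mp h3
          have h4 : i ^ p = i ^ 2 * i ^ (p - 2) := by
            rw [← pow_add]
            congr 1
            omega
          rw [h4, h2, zero_mul]
        set φ : B' ⧸ I →+* B' := Ideal.Quotient.lift I (frobenius B' p)
          (fun i hi => by rw [frobenius_def]; exact hIp i hi) with hφdef
        have hφmk : ∀ b : B', φ (Ideal.Quotient.mk I b) = b ^ p := by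
          intro b
          rw [hφdef, Ideal.Quotient.lift_mk]
          exact frobenius_def p b
        have hmkφ : ∀ y : B' ⧸ I, Ideal.Quotient.mk I (φ y) = y ^ p := by
          intro y
          obtain ⟨b, rfl⟩ := Ideal.Quotient.mk_surjective y
          rw [hφmk, map_pow]
        set e : MvPolynomial (↥(IsLocalRing.residue R '' B₀))
            (IsLocalRing.ResidueField R) →+* IsLocalRing.ResidueField R :=
          MvPolynomial.eval₂Hom (frobenius (IsLocalRing.ResidueField R) p)
            (fun b : ↥(IsLocalRing.residue R '' B₀) =>
              (b : IsLocalRing.ResidueField R)) with hedef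
        have hessurj : Function.Surjective e := by
          intro x
          have hx : x ∈ Algebra.adjoin ℤ
              ((Set.range fun a : IsLocalRing.ResidueField R => a ^ p)
                ∪ (IsLocalRing.residue R '' B₀)) := by
            rw [hKspan]; trivial
          induction hx using Algebra.adjoin_induction with
          | mem y hy =>
            rcases hy with ⟨a, rfl⟩ | hy
            · refine ⟨MvPolynomial.C a, ?_⟩
              show MvPolynomial.eval₂ _ _ _ = _
              rw [MvPolynomial.eval₂_C]
              exact frobenius_def p a
            · refine ⟨MvPolynomial.X ⟨y, hy⟩, ?_⟩
              show MvPolynomial.eval₂ _ _ _ = _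
              rw [MvPolynomial.eval₂_X]
          | algebraMap n =>
            refine ⟨(n : MvPolynomial (↥(IsLocalRing.residue R '' B₀))
              (IsLocalRing.ResidueField R)), ?_⟩
            rw [map_intCast]
            exact (eq_intCast (algebraMap ℤ (IsLocalRing.ResidueField R)) n).symm
          | add a b _ _ ha hb =>
            obtain ⟨Pa, rfl⟩ := ha
            obtain ⟨Pb, rfl⟩ := hb
            exact ⟨Pa + Pb, map_add e Pa Pb⟩
          | mul a b _ _ ha hb =>
            obtain ⟨Pa, rfl⟩ := ha
            obtain ⟨Pb, rfl⟩ := hb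
            exact ⟨Pa * Pb, map_mul e Pa Pb⟩
        set ι : ↥(IsLocalRing.residue R '' B₀) → B' := fun b =>
          algebraMap (↥(IntermediateField.adjoin (ZMod p)
            (IsLocalRing.residue R '' B₀))) B'
            ⟨(b : IsLocalRing.ResidueField R),
              IntermediateField.subset_adjoin _ _ b.2⟩ with hιdef
        set τ : IsLocalRing.ResidueField R →+* B' := φ.comp f.toRingHom with hτdef
        have hιp : ∀ b, ι b ^ p = τ (b : IsLocalRing.ResidueField R) := by
          intro b
          show ι b ^ p = φ (f (b : IsLocalRing.ResidueField R))
          have h1 : (b : IsLocalRing.ResidueField R)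
              = algebraMap (↥(IntermediateField.adjoin (ZMod p)
                (IsLocalRing.residue R '' B₀))) (IsLocalRing.ResidueField R)
                ⟨(b : IsLocalRing.ResidueField R),
                  IntermediateField.subset_adjoin _ _ b.2⟩ := rfl
          rw [h1, f.commutes]
          have h2 : algebraMap (↥(IntermediateField.adjoin (ZMod p)
              (IsLocalRing.residue R '' B₀))) (B' ⧸ I)
              ⟨(b : IsLocalRing.ResidueField R),
                IntermediateField.subset_adjoin _ _ b.2⟩
              = Ideal.Quotient.mk I (ι b) := rfl
          rw [h2, hφmk]
        set ψ : MvPolynomial (↥(IsLocalRing.residue R '' B₀))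
            (IsLocalRing.ResidueField R) →+* B' := MvPolynomial.eval₂Hom τ ι with hψdef
        have hker : ∀ P, e P = 0 → ψ P = 0 := by
          intro P hP
          set u : (↥(IsLocalRing.residue R '' B₀) →₀ ℕ) → IsLocalRing.ResidueField R :=
            fun r => MvPolynomial.eval₂ (RingHom.id (IsLocalRing.ResidueField R))
              (fun b : ↥(IsLocalRing.residue R '' B₀) =>
                (b : IsLocalRing.ResidueField R)) (Qc p r P) with hudef
          have hfrobQ : ∀ Q : MvPolynomial (↥(IsLocalRing.residue R '' B₀))
              (IsLocalRing.ResidueField R),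
              MvPolynomial.eval₂ (frobenius (IsLocalRing.ResidueField R) p)
                (fun b : ↥(IsLocalRing.residue R '' B₀) =>
                  (b : IsLocalRing.ResidueField R) ^ p) Q
              = (MvPolynomial.eval₂ (RingHom.id (IsLocalRing.ResidueField R))
                  (fun b : ↥(IsLocalRing.residue R '' B₀) =>
                    (b : IsLocalRing.ResidueField R)) Q) ^ p := by
            intro Q
            have h1 := MvPolynomial.eval₂_comp_left
              (frobenius (IsLocalRing.ResidueField R) p)
              (RingHom.id (IsLocalRing.ResidueField R))
              (fun b : ↥(IsLocalRing.residue R '' B₀) =>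
                (b : IsLocalRing.ResidueField R)) Q
            rw [RingHom.comp_id] at h1
            have h3 : (⇑(frobenius (IsLocalRing.ResidueField R) p) ∘
                fun b : ↥(IsLocalRing.residue R '' B₀) =>
                  (b : IsLocalRing.ResidueField R))
                = fun b : ↥(IsLocalRing.residue R '' B₀) =>
                  (b : IsLocalRing.ResidueField R) ^ p :=
              funext fun b => frobenius_def p _
            rw [h3] at h1
            rw [← h1, frobenius_def]
          have hP' : MvPolynomial.eval₂ (frobenius (IsLocalRing.ResidueField R) p)
              (fun b : ↥(IsLocalRing.residue R '' B₀) =>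
                (b : IsLocalRing.ResidueField R)) P = 0 := hP
          rw [eval₂_decomp (frobenius (IsLocalRing.ResidueField R) p)
            (fun b : ↥(IsLocalRing.residue R '' B₀) =>
              (b : IsLocalRing.ResidueField R)) p P] at hP'
          have hP2 : ∑ r ∈ P.support.image (fmod p), (u r) ^ p * pMonomial r = 0 := by
            rw [← hP']
            refine Finset.sum_congr rfl fun r _ => ?_
            rw [hfrobQ]
            rfl
          rw [← Finset.sum_attach (P.support.image (fmod p))
            (fun r => (u r) ^ p * pMonomial r)] at hP2
          have hredr : ∀ r : {x // x ∈ P.support.image (fmod p)}, ∀ b, r.1 b < p := by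
            intro r b
            obtain ⟨m, _, he⟩ := Finset.mem_image.mp r.2
            rw [← he]
            exact fmod_lt p (by omega) m b
          have happ := li_finset_eq_zero hKli (P.support.image (fmod p)).attach
            (fun r => (⟨r.1, hredr r⟩ :
              {α : ↥(IsLocalRing.residue R '' B₀) →₀ ℕ // ∀ b, α b < p}))
            (fun r₁ _ r₂ _ h => Subtype.ext (congrArg
              (fun t : {α : ↥(IsLocalRing.residue R '' B₀) →₀ ℕ // ∀ b, α b < p} => t.1) h))
            (fun r => ⟨(u r.1) ^ p, Algebra.subset_adjoin ⟨u r.1, rfl⟩⟩)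
            (by refine Eq.trans (Finset.sum_congr rfl fun r _ => ?_) hP2; rfl)
          have hu0 : ∀ r ∈ P.support.image (fmod p), u r = 0 := by
            intro r hr
            have h1 := happ ⟨r, hr⟩ (Finset.mem_attach _ _)
            have h2 : (u r) ^ p = 0 := congrArg Subtype.val h1
            exact (pow_eq_zero_iff (by omega : p ≠ 0)).mp h2
          have hψP : ψ P = MvPolynomial.eval₂ τ ι P := rfl
          rw [hψP, eval₂_decomp τ ι p P]
          refine Finset.sum_eq_zero fun r hr => ?_
          have hψQ : MvPolynomial.eval₂ τ (fun i => ι i ^ p) (Qc p r P) = τ (u r) := by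
            have h1 := MvPolynomial.eval₂_comp_left τ
              (RingHom.id (IsLocalRing.ResidueField R))
              (fun b : ↥(IsLocalRing.residue R '' B₀) =>
                (b : IsLocalRing.ResidueField R)) (Qc p r P)
            rw [RingHom.comp_id] at h1
            have h2 : (⇑τ ∘ fun b : ↥(IsLocalRing.residue R '' B₀) =>
                (b : IsLocalRing.ResidueField R)) = fun i => ι i ^ p :=
              funext fun i => (hιp i).symm
            rw [h2] at h1
            exact h1.symm
          rw [hψQ, hu0 r hr, map_zero, zero_mul]
        set q := RingHom.quotientKerEquivOfSurjective hessurj with hqdef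
        set g₀ : IsLocalRing.ResidueField R →+* B' :=
          (Ideal.Quotient.lift (RingHom.ker e) ψ
            (fun a ha => hker a (RingHom.mem_ker.mp ha))).comp
            q.symm.toRingHom with hg₀def
        have hg₀e : ∀ P, g₀ (e P) = ψ P := by
          intro P
          have hq : q.symm (e P) = Ideal.Quotient.mk (RingHom.ker e) P := by
            apply q.injective
            rw [RingEquiv.apply_symm_apply]
            exact (RingHom.kerLift_mk e P).symm
          have hunfold : g₀ (e P) = (Ideal.Quotient.lift (RingHom.ker e) ψ
              (fun a ha => hker a (RingHom.mem_ker.mp ha))) (q.symm (e P)) := rfl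
          rw [hunfold, hq, Ideal.Quotient.lift_mk]
        have hcomm : ∀ c : ↥(IntermediateField.adjoin (ZMod p)
            (IsLocalRing.residue R '' B₀)),
            g₀ (algebraMap (↥(IntermediateField.adjoin (ZMod p)
              (IsLocalRing.residue R '' B₀))) (IsLocalRing.ResidueField R) c)
            = algebraMap (↥(IntermediateField.adjoin (ZMod p)
              (IsLocalRing.residue R '' B₀))) B' c := by
          rintro ⟨c, hc⟩
          induction hc using IntermediateField.adjoin_induction with
          | mem x hx =>
            have h1 : x = e (MvPolynomial.X
                (⟨x, hx⟩ : ↥(IsLocalRing.residue R '' B₀))) := by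
              show x = MvPolynomial.eval₂ _ _ _
              rw [MvPolynomial.eval₂_X]
            show g₀ x = _
            conv_lhs => rw [h1, hg₀e]
            show MvPolynomial.eval₂ τ ι (MvPolynomial.X ⟨x, hx⟩) = _
            rw [MvPolynomial.eval₂_X]
          | algebraMap x =>
            have hzext := RingHom.congr_fun (RingHom.ext_zmod
              ((g₀.comp (algebraMap (↥(IntermediateField.adjoin (ZMod p)
                (IsLocalRing.residue R '' B₀))) (IsLocalRing.ResidueField R))).comp
                (algebraMap (ZMod p) (↥(IntermediateField.adjoin (ZMod p)
                  (IsLocalRing.residue R '' B₀)))))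
              ((algebraMap (↥(IntermediateField.adjoin (ZMod p)
                (IsLocalRing.residue R '' B₀))) B').comp
                (algebraMap (ZMod p) (↥(IntermediateField.adjoin (ZMod p)
                  (IsLocalRing.residue R '' B₀)))))) x
            exact hzext
          | add x y hx hy ihx ihy =>
            show g₀ (algebraMap (↥(IntermediateField.adjoin (ZMod p)
              (IsLocalRing.residue R '' B₀))) (IsLocalRing.ResidueField R)
              ((⟨x, hx⟩ : ↥(IntermediateField.adjoin (ZMod p)
                (IsLocalRing.residue R '' B₀))) + ⟨y, hy⟩))
              = algebraMap (↥(IntermediateField.adjoin (ZMod p)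
                (IsLocalRing.residue R '' B₀))) B'
                ((⟨x, hx⟩ : ↥(IntermediateField.adjoin (ZMod p)
                  (IsLocalRing.residue R '' B₀))) + ⟨y, hy⟩)
            rw [map_add, map_add, map_add, ihx, ihy]
          | inv x hx ih =>
            have hgoal : ∀ cc : ↥(IntermediateField.adjoin (ZMod p)
                (IsLocalRing.residue R '' B₀)),
                g₀ (algebraMap _ (IsLocalRing.ResidueField R) cc)
                  = algebraMap _ B' cc →
                g₀ (algebraMap _ (IsLocalRing.ResidueField R) cc⁻¹)
                  = algebraMap _ B' cc⁻¹ := by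
              intro cc ihcc
              rcases eq_or_ne cc 0 with rfl | h0
              · rw [inv_zero, map_zero, map_zero, map_zero]
              · have hu : g₀ (algebraMap _ (IsLocalRing.ResidueField R) cc⁻¹)
                    * g₀ (algebraMap _ (IsLocalRing.ResidueField R) cc) = 1 := by
                  rw [← map_mul, ← map_mul, inv_mul_cancel₀ h0, map_one, map_one]
                have hw : algebraMap _ B' cc⁻¹ * algebraMap _ B' cc = 1 := by
                  rw [← map_mul, inv_mul_cancel₀ h0, map_one]
                calc g₀ (algebraMap _ (IsLocalRing.ResidueField R) cc⁻¹)
                    = g₀ (algebraMap _ (IsLocalRing.ResidueField R) cc⁻¹)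
                      * (algebraMap _ B' cc * algebraMap _ B' cc⁻¹) := by
                      rw [mul_comm (algebraMap _ B' cc), hw, mul_one]
                  _ = (g₀ (algebraMap _ (IsLocalRing.ResidueField R) cc⁻¹)
                        * g₀ (algebraMap _ (IsLocalRing.ResidueField R) cc))
                        * algebraMap _ B' cc⁻¹ := by
                      rw [← ihcc]; ring
                  _ = algebraMap _ B' cc⁻¹ := by rw [hu, one_mul]
            exact hgoal ⟨x, hx⟩ ih
          | mul x y hx hy ihx ihy =>
            show g₀ (algebraMap (↥(IntermediateField.adjoin (ZMod p)
              (IsLocalRing.residue R '' B₀))) (IsLocalRing.ResidueField R)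
              ((⟨x, hx⟩ : ↥(IntermediateField.adjoin (ZMod p)
                (IsLocalRing.residue R '' B₀))) * ⟨y, hy⟩))
              = algebraMap (↥(IntermediateField.adjoin (ZMod p)
                (IsLocalRing.residue R '' B₀))) B'
                ((⟨x, hx⟩ : ↥(IntermediateField.adjoin (ZMod p)
                  (IsLocalRing.residue R '' B₀))) * ⟨y, hy⟩)
            rw [map_mul, map_mul, map_mul, ihx, ihy]
        refine ⟨{ toRingHom := g₀, commutes' := hcomm }, ?_⟩
        refine AlgHom.ext fun x => ?_
        obtain ⟨P, rfl⟩ := hessurj x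
        show Ideal.Quotient.mk I (g₀ (e P)) = f (e P)
        rw [hg₀e]
        have hhom : (Ideal.Quotient.mk I).comp ψ = f.toRingHom.comp e := by
          apply MvPolynomial.ringHom_ext
          · intro c
            show Ideal.Quotient.mk I (ψ (MvPolynomial.C c)) = f (e (MvPolynomial.C c))
            have he1 : e (MvPolynomial.C c)
                = frobenius (IsLocalRing.ResidueField R) p c := by
              show MvPolynomial.eval₂ _ _ _ = _
              rw [MvPolynomial.eval₂_C]
            have he2 : ψ (MvPolynomial.C c) = τ c := by
              show MvPolynomial.eval₂ _ _ _ = _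
              rw [MvPolynomial.eval₂_C]
            rw [he1, he2]
            show Ideal.Quotient.mk I (φ (f c)) = f (frobenius _ p c)
            rw [hmkφ, frobenius_def, map_pow]
          · intro b
            show Ideal.Quotient.mk I (ψ (MvPolynomial.X b)) = f (e (MvPolynomial.X b))
            have he1 : e (MvPolynomial.X b) = (b : IsLocalRing.ResidueField R) := by
              show MvPolynomial.eval₂ _ _ _ = _
              rw [MvPolynomial.eval₂_X]
            have he2 : ψ (MvPolynomial.X b) = ι b := by
              show MvPolynomial.eval₂ _ _ _ = _
              rw [MvPolynomial.eval₂_X]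
            rw [he1, he2]
            have h1 : (b : IsLocalRing.ResidueField R)
                = algebraMap (↥(IntermediateField.adjoin (ZMod p)
                  (IsLocalRing.residue R '' B₀))) (IsLocalRing.ResidueField R)
                  ⟨(b : IsLocalRing.ResidueField R),
                    IntermediateField.subset_adjoin _ _ b.2⟩ := rfl
            rw [h1, f.commutes]
            rfl
        exact RingHom.congr_fun hhom P
end
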